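/- arXiv:2008.02221 — 6 statements merged into one kernel-verified Lean document; each statement's English description precedes it below -/
import Mathlib

section
/- (Tits-type theorem, Theorem 5.2 of the paper) Let A be a commutative ring, n ≥ 3 an integer, and 𝔮 ⊆ A an ideal. Then E_n(A,𝔮²) is contained in F_n(A,𝔮). -/
/-- The set of elementary matrices `1 + a • e i j` (viewed inside `SL n A`)
with off-diagonal position `(i,j)` and entry `a` belonging to the set `S`. -/
def elemSet (n : ℕ) (A : Type*) [CommRing A] (S : Set A) :
    Set (Matrix.SpecialLinearGroup (Fin n) A) :=
  { M | ∃ i j : Fin n, i ≠ j ∧ ∃ a ∈ S,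
      (M : Matrix (Fin n) (Fin n) A) = 1 + Matrix.single i j a }

/-- `E_n(A)`: the subgroup of `SL_n(A)` generated by all elementary matrices. -/
def En (n : ℕ) (A : Type*) [CommRing A] :
    Subgroup (Matrix.SpecialLinearGroup (Fin n) A) :=
  Subgroup.closure (elemSet n A Set.univ)

/-- `F_n(A,𝔮)`: the subgroup generated by elementary matrices with entry in `𝔮`. -/
def Fn (n : ℕ) (A : Type*) [CommRing A] (q : Ideal A) :
    Subgroup (Matrix.SpecialLinearGroup (Fin n) A) :=
  Subgroup.closure (elemSet n A (q : Set A))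

/-- `SL_n(A,𝔮)`: the principal congruence subgroup, i.e. the kernel of
reduction `SL_n(A) → SL_n(A/𝔮)`. -/
def SLrel (n : ℕ) (A : Type*) [CommRing A] (q : Ideal A) :
    Subgroup (Matrix.SpecialLinearGroup (Fin n) A) :=
  (Matrix.SpecialLinearGroup.map (Ideal.Quotient.mk q)).ker

/-- `E_n(A,𝔮)`: the normal closure of `F_n(A,𝔮)` in `E_n(A)`, i.e. the subgroup
generated by all `E_n(A)`-conjugates of elements of `F_n(A,𝔮)`. -/
def EnRel (n : ℕ) (A : Type*) [CommRing A] (q : Ideal A) :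
    Subgroup (Matrix.SpecialLinearGroup (Fin n) A) :=
  Subgroup.closure { M | ∃ g ∈ En n A, ∃ f ∈ Fn n A q, M = g * f * g⁻¹ }



namespace TitsAux


open Matrix

variable {n : ℕ} {A : Type*} [CommRing A] {q : Ideal A}

/-- Membership of a matrix in (the image of) `F_n(A,q)`. -/
def InF (q : Ideal A) (X : Matrix (Fin n) (Fin n) A) : Prop :=
  ∃ M ∈ Fn n A q, (M : Matrix (Fin n) (Fin n) A) = X

lemma InF.one : InF q (1 : Matrix (Fin n) (Fin n) A) :=
  ⟨1, one_mem _, Matrix.SpecialLinearGroup.coe_one⟩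

lemma InF.mul {X Y : Matrix (Fin n) (Fin n) A} (hX : InF q X) (hY : InF q Y) :
    InF q (X * Y) := by
  obtain ⟨M, hM, rfl⟩ := hX
  obtain ⟨N, hN, rfl⟩ := hY
  exact ⟨M * N, mul_mem hM hN, Matrix.SpecialLinearGroup.coe_mul M N⟩

lemma InF.elem {i j : Fin n} (hij : i ≠ j) {c : A} (hc : c ∈ q) :
    InF q (1 + Matrix.single i j c) :=
  ⟨⟨transvection i j c, det_transvection_of_ne i j hij c⟩,
    Subgroup.subset_closure ⟨i, j, hij, c, hc, rfl⟩, rfl⟩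

lemma vMv_mul_vMv (v w x y : Fin n → A) :
    vecMulVec v w * vecMulVec x y = (w ⬝ᵥ x) • vecMulVec v y := by
  ext i j
  simp only [mul_apply, vecMulVec_apply, Matrix.smul_apply, smul_eq_mul, dotProduct]
  rw [Finset.sum_mul]
  exact Finset.sum_congr rfl fun l _ => by ring

lemma vMv_add_right (v w₁ w₂ : Fin n → A) :
    vecMulVec v (w₁ + w₂) = vecMulVec v w₁ + vecMulVec v w₂ := by
  ext i j; simp [vecMulVec_apply, mul_add]

lemma vMv_add_left (v₁ v₂ w : Fin n → A) :
    vecMulVec (v₁ + v₂) w = vecMulVec v₁ w + vecMulVec v₂ w := by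
  ext i j; simp [vecMulVec_apply, add_mul]

lemma vMv_neg_left (v w : Fin n → A) :
    vecMulVec (-v) w = - vecMulVec v w := by
  ext i j; simp [vecMulVec_apply]

lemma vMv_zero_right (v : Fin n → A) :
    vecMulVec v (0 : Fin n → A) = 0 := by
  ext i j; simp [vecMulVec_apply]

lemma vMv_zero_left (w : Fin n → A) :
    vecMulVec (0 : Fin n → A) w = 0 := by
  ext i j; simp [vecMulVec_apply]

lemma one_add_vMv_mul_right {v w₁ w₂ : Fin n → A} (h : w₁ ⬝ᵥ v = 0) :
    (1 + vecMulVec v w₁) * (1 + vecMulVec v w₂) = 1 + vecMulVec v (w₁ + w₂) := by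
  have hz : vecMulVec v w₁ * vecMulVec v w₂ = 0 := by
    rw [vMv_mul_vMv, h, zero_smul]
  have expand : (1 + vecMulVec v w₁) * (1 + vecMulVec v w₂)
      = 1 + vecMulVec v w₁ + vecMulVec v w₂ + vecMulVec v w₁ * vecMulVec v w₂ := by
    noncomm_ring
  rw [expand, hz, add_zero, vMv_add_right, add_assoc]

lemma one_add_vMv_mul_left {v₁ v₂ w : Fin n → A} (h : w ⬝ᵥ v₂ = 0) :
    (1 + vecMulVec v₁ w) * (1 + vecMulVec v₂ w) = 1 + vecMulVec (v₁ + v₂) w := by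
  have hz : vecMulVec v₁ w * vecMulVec v₂ w = 0 := by
    rw [vMv_mul_vMv, h, zero_smul]
  have expand : (1 + vecMulVec v₁ w) * (1 + vecMulVec v₂ w)
      = 1 + vecMulVec v₁ w + vecMulVec v₂ w + vecMulVec v₁ w * vecMulVec v₂ w := by
    noncomm_ring
  rw [expand, hz, add_zero, vMv_add_left, add_assoc]

lemma vMv_single_single (i j : Fin n) (a b : A) :
    vecMulVec (Pi.single i a) (Pi.single j b) = Matrix.single i j (a * b) := by
  ext x y
  simp only [vecMulVec_apply, Pi.single_apply, Matrix.single, of_apply]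
  split_ifs with h1 h2 h3 h2 <;> simp_all

lemma colF (Z : Fin n → A) (k : Fin n) (hZk : Z k = 0) (hZ : ∀ l, Z l ∈ q) :
    InF q (1 + vecMulVec Z (Pi.single k 1)) := by
  have main : ∀ s : Finset (Fin n), k ∉ s →
      InF q (1 + vecMulVec (fun l => if l ∈ s then Z l else 0) (Pi.single k 1)) := by
    intro s
    induction s using Finset.induction_on with
    | empty =>
      intro _
      have h0 : (fun l => if l ∈ (∅ : Finset (Fin n)) then Z l else 0) = (0 : Fin n → A) := by
        funext l; simp
      rw [h0, vMv_zero_left, add_zero]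
      exact InF.one
    | insert a s ha ih =>
      intro hk
      have hka : a ≠ k := fun h => hk (h ▸ Finset.mem_insert_self a s)
      have hks : k ∉ s := fun h => hk (Finset.mem_insert_of_mem h)
      have hfun : (fun l => if l ∈ insert a s then Z l else 0)
          = (fun l => if l ∈ s then Z l else 0) + Pi.single a (Z a) := by
        funext l
        by_cases h1 : l = a
        · subst h1; simp [ha]
        · simp [Finset.mem_insert, h1, Pi.single_apply]
      have hdot : (Pi.single k (1:A)) ⬝ᵥ (Pi.single a (Z a)) = 0 := by
        rw [single_dotProduct, one_mul, Pi.single_eq_of_ne hka.symm]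
      rw [hfun, ← one_add_vMv_mul_left hdot]
      refine InF.mul (ih hks) ?_
      rw [vMv_single_single, mul_one]
      exact InF.elem hka (hZ a)
  have := main (Finset.univ.erase k) (Finset.notMem_erase k _)
  have hfun : (fun l => if l ∈ Finset.univ.erase k then Z l else 0) = Z := by
    funext l
    by_cases h : l = k
    · subst h; simp [hZk]
    · simp [Finset.mem_erase, h]
  rwa [hfun] at this

lemma rowF (W : Fin n → A) (k : Fin n) (hWk : W k = 0) (hW : ∀ l, W l ∈ q) :
    InF q (1 + vecMulVec (Pi.single k 1) W) := by
  have main : ∀ s : Finset (Fin n), k ∉ s →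
      InF q (1 + vecMulVec (Pi.single k 1) (fun l => if l ∈ s then W l else 0)) := by
    intro s
    induction s using Finset.induction_on with
    | empty =>
      intro _
      have h0 : (fun l => if l ∈ (∅ : Finset (Fin n)) then W l else 0) = (0 : Fin n → A) := by
        funext l; simp
      rw [h0, vMv_zero_right, add_zero]
      exact InF.one
    | insert a s ha ih =>
      intro hk
      have hka : k ≠ a := fun h => hk (h ▸ Finset.mem_insert_self a s)
      have hks : k ∉ s := fun h => hk (Finset.mem_insert_of_mem h)
      have hfun : (fun l => if l ∈ insert a s then W l else 0)
          = Pi.single a (W a) + (fun l => if l ∈ s then W l else 0) := by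
        funext l
        by_cases h1 : l = a
        · subst h1; simp [ha]
        · simp [Finset.mem_insert, h1, Pi.single_apply]
      have hdot : (Pi.single a (W a)) ⬝ᵥ (Pi.single k (1:A)) = 0 := by
        rw [dotProduct_single, mul_one, Pi.single_eq_of_ne hka]
      rw [hfun, ← one_add_vMv_mul_right hdot]
      refine InF.mul ?_ (ih hks)
      rw [show vecMulVec (Pi.single k (1:A)) (Pi.single a (W a))
            = Matrix.single k a (W a) by rw [vMv_single_single, one_mul]]
      exact InF.elem hka (hW a)
  have := main (Finset.univ.erase k) (Finset.notMem_erase k _)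
  have hfun : (fun l => if l ∈ Finset.univ.erase k then W l else 0) = W := by
    funext l
    by_cases h : l = k
    · subst h; simp [hWk]
    · simp [Finset.mem_erase, h]
  rwa [hfun] at this

lemma core (V W : Fin n → A) (k : Fin n) (hVk : V k = 0) (hWk : W k = 0)
    (hWV : W ⬝ᵥ V = 0) (hV : ∀ l, V l ∈ q) (hW : ∀ l, W l ∈ q) :
    InF q (1 + vecMulVec V W) := by
  set P := vecMulVec V (Pi.single k (1:A)) with hP
  set Q := vecMulVec (Pi.single k (1:A)) W with hQ
  set R := vecMulVec V W with hR
  have e1 : (Pi.single k (1:A)) ⬝ᵥ V = 0 := by rw [single_dotProduct, one_mul, hVk]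
  have e2 : W ⬝ᵥ (Pi.single k (1:A)) = 0 := by rw [dotProduct_single, mul_one, hWk]
  have e3 : (Pi.single k (1:A)) ⬝ᵥ (Pi.single k (1:A)) = (1:A) := by
    rw [single_dotProduct, one_mul, Pi.single_eq_same]
  have hPP : P * P = 0 := by rw [hP, vMv_mul_vMv, e1, zero_smul]
  have hQQ : Q * Q = 0 := by rw [hQ, vMv_mul_vMv, e2, zero_smul]
  have hQP : Q * P = 0 := by rw [hQ, hP, vMv_mul_vMv, hWV, zero_smul]
  have hPQ : P * Q = R := by rw [hP, hQ, vMv_mul_vMv, e3, one_smul, hR]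
  have hPR : P * R = 0 := by rw [hP, hR, vMv_mul_vMv, e1, zero_smul]
  have hQR : Q * R = 0 := by rw [hQ, hR, vMv_mul_vMv, hWV, zero_smul]
  have hRR : R * R = 0 := by rw [hR, vMv_mul_vMv, hWV, zero_smul]
  have hRP : R * P = 0 := by rw [hR, hP, vMv_mul_vMv, hWV, zero_smul]
  have hRQ : R * Q = 0 := by rw [hR, hQ, vMv_mul_vMv, e2, zero_smul]
  have ea : (1 + P) * (1 + Q) = 1 + P + Q + R := by
    have h : (1 + P) * (1 + Q) = 1 + P + Q + P * Q := by noncomm_ring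
    rw [h, hPQ]
  have eb : (1 + -P) * (1 + -Q) = 1 - P - Q + R := by
    have h : (1 + -P) * (1 + -Q) = 1 - P - Q + P * Q := by noncomm_ring
    rw [h, hPQ]
  have hx : (1 + P + Q + R) * P = P := by
    simp only [add_mul, one_mul, hPP, hQP, hRP, add_zero]
  have hy : (1 + P + Q + R) * Q = Q + R := by
    simp only [add_mul, one_mul, hPQ, hQQ, hRQ, add_zero]
  have hz : (1 + P + Q + R) * R = R := by
    simp only [add_mul, one_mul, hPR, hQR, hRR, add_zero]
  have key : (1 + P + Q + R) * (1 - P - Q + R) = 1 + R := by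
    rw [mul_add, mul_sub, mul_sub, mul_one, hx, hy, hz]
    abel
  have final : (1 : Matrix (Fin n) (Fin n) A) + R
      = ((1 + P) * (1 + Q)) * ((1 + -P) * (1 + -Q)) := by
    rw [ea, eb, key]
  rw [hR] at final
  rw [show (1 + vecMulVec V W : Matrix (Fin n) (Fin n) A) = _ from final]
  have c1 : InF q (1 + P) := colF V k hVk hV
  have c2 : InF q (1 + -P) := by
    rw [hP, ← vMv_neg_left]
    exact colF (-V) k (by simp [hVk]) (fun l => by simpa using q.neg_mem (hV l))
  have c3 : InF q (1 + Q) := rowF W k hWk hW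
  have c4 : InF q (1 + -Q) := by
    rw [hQ, show -vecMulVec (Pi.single k (1:A)) W = vecMulVec (Pi.single k (1:A)) (-W) by
      ext i j; simp [vecMulVec_apply]]
    exact rowF (-W) k (by simp [hWk]) (fun l => by simpa using q.neg_mem (hW l))
  exact InF.mul (InF.mul c1 c3) (InF.mul c2 c4)

lemma lemB (V W : Fin n → A) (k m : Fin n) (hkm : k ≠ m)
    (hVk : V k = 0) (hVm : V m = 0)
    (hsupp : ∀ l, l ≠ k → l ≠ m → W l = 0)
    (hV : ∀ l, V l ∈ q) (hW : ∀ l, W l ∈ q) :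
    InF q (1 + vecMulVec V W) := by
  have hWeq : W = (W m • (Pi.single m 1 : Fin n → A)) + (W k • (Pi.single k 1 : Fin n → A)) := by
    funext l
    by_cases h1 : l = k
    · subst h1
      simp [Pi.single_apply, hkm, Ne.symm hkm]
    · by_cases h2 : l = m
      · subst h2; simp [Pi.single_apply, h1]
      · simp [Pi.single_apply, h1, h2, hsupp l h1 h2]
  have hd1 : (W m • (Pi.single m 1 : Fin n → A)) ⬝ᵥ V = 0 := by
    rw [smul_dotProduct, single_dotProduct, one_mul, hVm, smul_eq_mul, mul_zero]
  have hsplit : (1 + vecMulVec V (W m • (Pi.single m 1 : Fin n → A))) * (1 + vecMulVec V (W k • (Pi.single k 1 : Fin n → A)))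
      = 1 + vecMulVec V W := by
    rw [one_add_vMv_mul_right hd1, ← hWeq]
  rw [← hsplit]
  have mem1 : ∀ l, (W m • (Pi.single m 1 : Fin n → A)) l ∈ q := by
    intro l
    simp only [Pi.smul_apply, Pi.single_apply, smul_eq_mul]
    by_cases h : l = m
    · simpa [h] using hW m
    · simp [h]
  have mem2 : ∀ l, (W k • (Pi.single k 1 : Fin n → A)) l ∈ q := by
    intro l
    simp only [Pi.smul_apply, Pi.single_apply, smul_eq_mul]
    by_cases h : l = k
    · simpa [h] using hW k
    · simp [h]
  refine InF.mul ?_ ?_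
  · refine core V _ k hVk ?_ hd1 hV mem1
    simp [Pi.single_apply, Ne.symm hkm]
  · refine core V _ m hVm ?_ ?_ hV mem2
    · simp [Pi.single_apply, hkm]
    · rw [smul_dotProduct, single_dotProduct, one_mul, hVk, smul_eq_mul, mul_zero]

lemma prodF {ι : Type*} [DecidableEq ι] (s : Finset ι) (v : Fin n → A) (W : ι → Fin n → A)
    (h0 : ∀ i ∈ s, W i ⬝ᵥ v = 0) (h1 : ∀ i ∈ s, InF q (1 + vecMulVec v (W i))) :
    InF q (1 + vecMulVec v (∑ i ∈ s, W i)) := by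
  induction s using Finset.induction_on with
  | empty =>
    rw [Finset.sum_empty, vMv_zero_right, add_zero]
    exact InF.one
  | insert a s ha ih =>
    rw [Finset.sum_insert ha, ← one_add_vMv_mul_right (h0 a (Finset.mem_insert_self a s))]
    exact InF.mul (h1 a (Finset.mem_insert_self a s))
      (ih (fun i hi => h0 i (Finset.mem_insert_of_mem hi))
          (fun i hi => h1 i (Finset.mem_insert_of_mem hi)))

lemma pairF (hn : 3 ≤ n) {a c : A} (ha : a ∈ q) (hc : c ∈ q) (v : Fin n → A) (k m : Fin n) :
    InF q (1 + vecMulVec v ((a * c) • (v m • (Pi.single k 1 : Fin n → A) - v k • (Pi.single m 1 : Fin n → A)))) := by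
  by_cases hkm : k = m
  · subst hkm
    rw [sub_self, smul_zero, vMv_zero_right, add_zero]
    exact InF.one
  · obtain ⟨l, hlk, hlm⟩ : ∃ l : Fin n, l ≠ k ∧ l ≠ m := by
      by_contra hcon
      push_neg at hcon
      have hsub : (Finset.univ : Finset (Fin n)) ⊆ {k, m} := by
        intro l _
        simp only [Finset.mem_insert, Finset.mem_singleton]
        by_cases h : l = k
        · exact Or.inl h
        · exact Or.inr (hcon l h)
      have h2 : Fintype.card (Fin n) ≤ 2 := by
        calc Fintype.card (Fin n) = (Finset.univ : Finset (Fin n)).card := (Finset.card_univ).symm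
        _ ≤ ({k, m} : Finset (Fin n)).card := Finset.card_le_card hsub
        _ ≤ 2 := (Finset.card_insert_le _ _).trans (by simp)
      rw [Fintype.card_fin] at h2
      omega
    set κ : Fin n → A := v m • (Pi.single k 1 : Fin n → A) - v k • (Pi.single m 1 : Fin n → A) with hκ
    have hκk : κ k = v m := by
      rw [hκ]
      simp [Pi.single_apply, Ne.symm hkm]
    have hκm : κ m = -(v k) := by
      rw [hκ]
      simp [Pi.single_apply, hkm]
    have hκl : ∀ l', l' ≠ k → l' ≠ m → κ l' = 0 := by
      intro l' h1 h2
      rw [hκ]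
      simp [Pi.single_apply, h1, h2]
    have hκv : κ ⬝ᵥ v = 0 := by
      rw [hκ, sub_dotProduct, smul_dotProduct, smul_dotProduct, single_dotProduct,
        single_dotProduct]
      simp only [smul_eq_mul]
      ring
    have hrw : vecMulVec v ((a * c) • κ) = vecMulVec (a • v) (c • κ) := by
      ext i j
      simp only [vecMulVec_apply, Pi.smul_apply, smul_eq_mul]
      ring
    rw [hrw]
    set W : Fin n → A := c • κ with hW
    set V₂ : Fin n → A := a • (v k • (Pi.single k 1 : Fin n → A) + v m • (Pi.single m 1 : Fin n → A)) with hV₂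
    set V₁ : Fin n → A := a • v - V₂ with hV₁
    have hV₂k : V₂ k = a * v k := by
      rw [hV₂]; simp [Pi.single_apply, Ne.symm hkm]
    have hV₂m : V₂ m = a * v m := by
      rw [hV₂]; simp [Pi.single_apply, hkm]
    have hV₂l : ∀ l', l' ≠ k → l' ≠ m → V₂ l' = 0 := by
      intro l' h1 h2
      rw [hV₂]; simp [Pi.single_apply, h1, h2]
    have hWk : W k = c * v m := by rw [hW]; simp [hκk]
    have hWm : W m = -(c * v k) := by rw [hW]; simp [hκm]
    have hWl : ∀ l', l' ≠ k → l' ≠ m → W l' = 0 := by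
      intro l' h1 h2
      rw [hW]; simp [hκl l' h1 h2]
    have hWV₂ : W ⬝ᵥ V₂ = 0 := by
      have : W ⬝ᵥ V₂ = ∑ l', W l' * V₂ l' := rfl
      rw [this]
      rw [Finset.sum_eq_add_of_mem k m (Finset.mem_univ _) (Finset.mem_univ _) hkm
        (fun l' _ hl' => by
          rw [hWl l' (by tauto) (by tauto)]
          exact zero_mul _)]
      rw [hWk, hWm, hV₂k, hV₂m]
      ring
    have hWav : W ⬝ᵥ (a • v) = 0 := by
      rw [hW, smul_dotProduct, dotProduct_smul, hκv]
      simp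
    have hWV₁ : W ⬝ᵥ V₁ = 0 := by
      rw [hV₁, dotProduct_sub, hWav, hWV₂, sub_zero]
    have hsplit : (1 + vecMulVec V₁ W) * (1 + vecMulVec V₂ W) = 1 + vecMulVec (a • v) W := by
      rw [one_add_vMv_mul_left hWV₂, hV₁, sub_add_cancel]
    rw [← hsplit]
    have hWmem : ∀ l', W l' ∈ q := by
      intro l'
      rw [hW]
      simpa using Ideal.mul_mem_right (κ l') q hc
    have hV₂mem : ∀ l', V₂ l' ∈ q := by
      intro l'
      rw [hV₂]
      simpa using Ideal.mul_mem_right _ q ha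
    have hV₁mem : ∀ l', V₁ l' ∈ q := by
      intro l'
      rw [hV₁]
      simpa using Ideal.sub_mem q (Ideal.mul_mem_right (v l') q ha) (hV₂mem l')
    refine InF.mul ?_ ?_
    · refine lemB V₁ W k m hkm ?_ ?_ hWl hV₁mem hWmem
      · rw [hV₁]; simp [hV₂k]
      · rw [hV₁]; simp [hV₂m]
    · refine core V₂ W l (hV₂l l hlk hlm) (hWl l hlk hlm) hWV₂ hV₂mem hWmem

lemma koszul (v u w : Fin n → A) :
    ∑ p : Fin n × Fin n, (w p.1 * u p.2) • (v p.2 • (Pi.single p.1 1 : Fin n → A) - v p.1 • (Pi.single p.2 1 : Fin n → A))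
      = (u ⬝ᵥ v) • w - (w ⬝ᵥ v) • u := by
  funext j
  rw [Finset.sum_apply]
  rw [Fintype.sum_prod_type]
  have hterm : ∀ k m : Fin n,
      ((w k * u m) • (v m • (Pi.single k 1 : Fin n → A) - v k • (Pi.single m 1 : Fin n → A))) j
        = (if j = k then w k * u m * v m else 0) - (if j = m then w k * u m * v k else 0) := by
    intro k m
    simp only [Pi.smul_apply, Pi.sub_apply, Pi.single_apply, smul_eq_mul]
    by_cases h1 : j = k <;> by_cases h2 : j = m <;> simp [h1, h2] <;> split_ifs <;> ring
  simp_rw [hterm, Finset.sum_sub_distrib]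
  have hs1 : ∑ k : Fin n, ∑ m : Fin n, (if j = k then w k * u m * v m else 0) = (u ⬝ᵥ v) * w j := by
    have h : ∀ k : Fin n, ∑ m : Fin n, (if j = k then w k * u m * v m else 0)
        = (if j = k then w k * (u ⬝ᵥ v) else 0) := by
      intro k
      by_cases h : j = k
      · simp only [h, if_true]
        rw [dotProduct, Finset.mul_sum]
        exact Finset.sum_congr rfl fun m _ => by ring
      · simp [h]
    simp_rw [h]
    rw [Finset.sum_ite_eq]
    simp [mul_comm]
  have hs2 : ∑ k : Fin n, ∑ m : Fin n, (if j = m then w k * u m * v k else 0) = (w ⬝ᵥ v) * u j := by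
    have h : ∀ k : Fin n, ∑ m : Fin n, (if j = m then w k * u m * v k else 0)
        = w k * u j * v k := by
      intro k
      rw [Finset.sum_ite_eq]
      simp
    simp_rw [h]
    rw [dotProduct, Finset.sum_mul]
    exact Finset.sum_congr rfl fun k _ => by ring
  rw [hs1, hs2]
  simp [Pi.smul_apply, smul_eq_mul]

lemma mul_vMv_mul (G G' : Matrix (Fin n) (Fin n) A) (p r : Fin n → A) :
    G * vecMulVec p r * G' = vecMulVec (G *ᵥ p) (r ᵥ* G') := by
  ext i j
  simp only [mul_apply, vecMulVec_apply, mulVec, vecMul, dotProduct]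
  rw [Finset.sum_mul_sum]
  rw [Finset.sum_comm]
  refine Finset.sum_congr rfl fun x _ => ?_
  rw [Finset.sum_mul]
  refine Finset.sum_congr rfl fun y _ => ?_
  ring

lemma key (hn : 3 ≤ n) {a b : A} (ha : a ∈ q) (hb : b ∈ q)
    (v u w : Fin n → A) (huv : u ⬝ᵥ v = 1) (hwv : w ⬝ᵥ v = 0) :
    InF q (1 + vecMulVec (a • v) (b • w)) := by
  have hrw : vecMulVec (a • v) (b • w) = vecMulVec v ((a * b) • w) := by
    ext i j
    simp only [vecMulVec_apply, Pi.smul_apply, smul_eq_mul]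
    ring
  rw [hrw]
  set Ω : Fin n × Fin n → Fin n → A :=
    fun p => (a * (b * (w p.1 * u p.2))) •
      (v p.2 • (Pi.single p.1 1 : Fin n → A) - v p.1 • (Pi.single p.2 1 : Fin n → A)) with hΩ
  have hΩ2 : ∀ p : Fin n × Fin n, Ω p = (a * b) •
      ((w p.1 * u p.2) • (v p.2 • (Pi.single p.1 1 : Fin n → A)
        - v p.1 • (Pi.single p.2 1 : Fin n → A))) := by
    intro p
    rw [hΩ, smul_smul]
    ring_nf
  have hsum : ∑ p : Fin n × Fin n, Ω p = (a * b) • w := by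
    simp_rw [hΩ2]
    rw [← Finset.smul_sum, koszul v u w, huv, hwv, one_smul, zero_smul, sub_zero]
  have horth : ∀ p : Fin n × Fin n, Ω p ⬝ᵥ v = 0 := by
    rintro ⟨k, m⟩
    rw [hΩ]
    simp only [smul_dotProduct, sub_dotProduct, single_dotProduct, smul_eq_mul]
    ring
  rw [← hsum]
  refine prodF Finset.univ v Ω (fun p _ => horth p) (fun p _ => ?_)
  rcases p with ⟨k, m⟩
  have hc : b * (w k * u m) ∈ q := Ideal.mul_mem_right _ q hb
  exact pairF hn ha hc v k m

end TitsAux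

/-- **Tits-type theorem** (Theorem 3 of Nica, Theorem 5.2 of the paper).
For any commutative ring `A`, `n ≥ 3` and ideal `𝔮 ⊆ A`, the relative elementary
subgroup `E_n(A,𝔮²)` is contained in `F_n(A,𝔮)`. -/
theorem enRel_sq_le_fn (A : Type*) [CommRing A] (n : ℕ) (hn : 3 ≤ n) (q : Ideal A) :
    EnRel n A (q ^ 2) ≤ Fn n A q := by
  have hgen : ∀ g x : Matrix.SpecialLinearGroup (Fin n) A,
      x ∈ elemSet n A ((q ^ 2 : Ideal A) : Set A) → g * x * g⁻¹ ∈ Fn n A q := by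
    intro g x hx
    obtain ⟨i, j, hij, c, hc, hxc⟩ := hx
    have hc' : c ∈ q * q := by
      have h0 : c ∈ q ^ 2 := hc
      rwa [pow_two] at h0
    have main : ∀ y : Matrix.SpecialLinearGroup (Fin n) A,
        (y : Matrix (Fin n) (Fin n) A) = 1 + Matrix.single i j c →
        g * y * g⁻¹ ∈ Fn n A q := by
      refine Submodule.mul_induction_on
        (C := fun r => ∀ y : Matrix.SpecialLinearGroup (Fin n) A,
          (y : Matrix (Fin n) (Fin n) A) = 1 + Matrix.single i j r →
          g * y * g⁻¹ ∈ Fn n A q) hc' ?_ ?_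
      · -- base case: r = a * b with a, b ∈ q
        intro a ha b hb y hy
        set G : Matrix (Fin n) (Fin n) A := (g : Matrix (Fin n) (Fin n) A) with hG
        set G' : Matrix (Fin n) (Fin n) A :=
          ((g⁻¹ : Matrix.SpecialLinearGroup (Fin n) A) : Matrix (Fin n) (Fin n) A) with hG'
        have hGG' : G * G' = 1 := by
          rw [hG, hG', ← Matrix.SpecialLinearGroup.coe_mul, mul_inv_cancel,
            Matrix.SpecialLinearGroup.coe_one]
        have hG'G : G' * G = 1 := by
          rw [hG, hG', ← Matrix.SpecialLinearGroup.coe_mul, inv_mul_cancel,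
            Matrix.SpecialLinearGroup.coe_one]
        set v : Fin n → A := fun l => G l i with hv
        set u : Fin n → A := fun l => G' i l with hu
        set w : Fin n → A := fun l => G' j l with hw
        have hwv : dotProduct w v = 0 := by
          have h1 : (G' * G) j i = 0 := by rw [hG'G]; exact Matrix.one_apply_ne (Ne.symm hij)
          simpa [Matrix.mul_apply, dotProduct, hv, hw] using h1
        have huv : dotProduct u v = 1 := by
          have h1 : (G' * G) i i = 1 := by rw [hG'G]; exact Matrix.one_apply_eq i
          simpa [Matrix.mul_apply, dotProduct, hv, hu] using h1
        obtain ⟨M, hM, hMe⟩ := TitsAux.key (q := q) hn ha hb v u w huv hwv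
        have hconj : G * ((1 : Matrix (Fin n) (Fin n) A) + Matrix.single i j (a * b)) * G'
            = 1 + Matrix.vecMulVec (a • v) (b • w) := by
          rw [show Matrix.single i j (a * b)
              = Matrix.vecMulVec (Pi.single i a) (Pi.single j b) from
              (TitsAux.vMv_single_single i j a b).symm]
          have e1 : Matrix.mulVec G (Pi.single i a) = a • v := by
            rw [Matrix.mulVec_single]
            funext l
            simp [hv, Pi.smul_apply, smul_eq_mul, mul_comm]
          have e2 : Matrix.vecMul (Pi.single j b) G' = b • w := by
            rw [Matrix.single_vecMul]
            funext l
            simp [hw, Pi.smul_apply, smul_eq_mul]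
          rw [mul_add, mul_one, add_mul, hGG', TitsAux.mul_vMv_mul, e1, e2]
        have heq : ((g * y * g⁻¹ : Matrix.SpecialLinearGroup (Fin n) A) :
            Matrix (Fin n) (Fin n) A) = (M : Matrix (Fin n) (Fin n) A) := by
          rw [Matrix.SpecialLinearGroup.coe_mul, Matrix.SpecialLinearGroup.coe_mul, hy, hMe]
          exact hconj
        have heq2 : g * y * g⁻¹ = M := Subtype.coe_injective heq
        rw [heq2]; exact hM
      · -- additive case
        intro c₁ c₂ ih₁ ih₂ y hy
        set y₁ : Matrix.SpecialLinearGroup (Fin n) A :=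
          ⟨Matrix.transvection i j c₁, Matrix.det_transvection_of_ne i j hij c₁⟩ with hy₁
        set y₂ : Matrix.SpecialLinearGroup (Fin n) A :=
          ⟨Matrix.transvection i j c₂, Matrix.det_transvection_of_ne i j hij c₂⟩ with hy₂
        have h12' : (y : Matrix (Fin n) (Fin n) A) = ((y₁ * y₂ : Matrix.SpecialLinearGroup (Fin n) A) : Matrix (Fin n) (Fin n) A) := by
          rw [Matrix.SpecialLinearGroup.coe_mul, hy]
          show (1 : Matrix (Fin n) (Fin n) A) + Matrix.single i j (c₁ + c₂)
              = Matrix.transvection i j c₁ * Matrix.transvection i j c₂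
          rw [Matrix.transvection, Matrix.transvection, mul_add, mul_one, add_mul, one_mul,
            Matrix.single_mul_single_of_ne (i := i) (j := j) (k := i) (h := Ne.symm hij) (d := c₂), add_zero,
            Matrix.single_add, add_assoc]
        have h12 : y = y₁ * y₂ := Subtype.coe_injective h12'
        rw [h12, show g * (y₁ * y₂) * g⁻¹ = (g * y₁ * g⁻¹) * (g * y₂ * g⁻¹) by group]
        exact mul_mem (ih₁ y₁ rfl) (ih₂ y₂ rfl)
    exact main x hxc
  rw [EnRel]
  refine (Subgroup.closure_le _).2 ?_
  rintro M ⟨g, hg, f, hf, rfl⟩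
  have h2 : g * f * g⁻¹ ∈ Subgroup.map (MulAut.conj g).toMonoidHom (Fn n A (q ^ 2)) :=
    ⟨f, hf, by simp⟩
  have h3 : Subgroup.map (MulAut.conj g).toMonoidHom (Fn n A (q ^ 2)) ≤ Fn n A q := by
    rw [show Fn n A (q ^ 2) = Subgroup.closure (elemSet n A ((q ^ 2 : Ideal A) : Set A)) from rfl,
      MonoidHom.map_closure]
    refine (Subgroup.closure_le _).2 ?_
    rintro M' ⟨x, hx, rfl⟩
    have h4 := hgen g x hx
    simpa using h4
  exact h3 h2
end

section
/- (Lemma 5.3(i) of the paper) Let A be a commutative ring, n ≥ 3, let q ∈ A generate a proper principal ideal 𝔮 = qA, and let D ∈ Mat_n(A) be a matrix whose image in Mat_n(A_q) is invertible, where A_q denotes the localization of A away from q. Then there exists an integer m > 0 such that for every M ∈ SL_n(A, 𝔮^m) there exists N ∈ SL_n(A, 𝔮) with D·M = N·D in Mat_n(A_q) (that is, D^{-1}·SL_n(A,𝔮)·D ⊇ SL_n(A,𝔮^m) as subsets of Mat_n(A_q)). -/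
lemma mem_SLrel_iff' {n : ℕ} {A : Type*} [CommRing A] (J : Ideal A)
    (M : Matrix.SpecialLinearGroup (Fin n) A) :
    M ∈ (Matrix.SpecialLinearGroup.map (Ideal.Quotient.mk J)).ker ↔
      ∀ i j, (M : Matrix (Fin n) (Fin n) A) i j - (1 : Matrix (Fin n) (Fin n) A) i j ∈ J := by
  rw [MonoidHom.mem_ker]
  constructor
  · intro h i j
    have h2 := congrArg (fun P : Matrix.SpecialLinearGroup (Fin n) (A ⧸ J) =>
      (P : Matrix (Fin n) (Fin n) (A ⧸ J)) i j) h
    simp only [Matrix.SpecialLinearGroup.map_apply_coe, RingHom.mapMatrix_apply,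
      Matrix.map_apply, Matrix.SpecialLinearGroup.coe_one] at h2
    rw [← Ideal.Quotient.eq]
    rw [h2]
    simp [Matrix.one_apply, apply_ite (Ideal.Quotient.mk J)]
  · intro h
    apply Subtype.ext
    ext i j
    simp only [Matrix.SpecialLinearGroup.map_apply_coe, RingHom.mapMatrix_apply,
      Matrix.map_apply, Matrix.SpecialLinearGroup.coe_one]
    have := (Ideal.Quotient.eq (I := J)).mpr (h i j)
    rw [this]
    simp [Matrix.one_apply, apply_ite (Ideal.Quotient.mk J)]


/-- **Lemma 5.3(i) of the paper.** Let `A` be a commutative ring, `n ≥ 3`,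
`q ∈ A` generating a proper principal ideal `𝔮 = qA`, and `D` a matrix over `A`
which becomes invertible over the localization `A_q = A[1/q]`. Then for some
`m > 0` one has `D⁻¹ · SL_n(A,𝔮) · D ⊇ SL_n(A,𝔮^m)`, i.e. every
`M ∈ SL_n(A,𝔮^m)` satisfies `D·M = N·D` in `Mat_n(A_q)` for some `N ∈ SL_n(A,𝔮)`. -/
theorem conj_SLrel (A : Type*) [CommRing A] (n : ℕ) (hn : 3 ≤ n)
    (q : A) (hq : Ideal.span {q} ≠ ⊤)
    (D : Matrix (Fin n) (Fin n) A)
    (hD : IsUnit ((algebraMap A (Localization.Away q)).mapMatrix D)) :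
    ∃ m : ℕ, 0 < m ∧
      ∀ M ∈ SLrel n A (Ideal.span {q} ^ m), ∃ N ∈ SLrel n A (Ideal.span {q}),
        (algebraMap A (Localization.Away q)).mapMatrix
            (D * (M : Matrix (Fin n) (Fin n) A)) =
          (algebraMap A (Localization.Away q)).mapMatrix
            ((N : Matrix (Fin n) (Fin n) A) * D) := by
  classical
  set f := algebraMap A (Localization.Away q) with hf
  -- det D becomes a unit in the localization
  have hdet : IsUnit (f D.det) := by
    rw [RingHom.map_det]
    exact (Matrix.isUnit_iff_isUnit_det _).mp hD
  -- find u, s with D.det * u = q ^ s in A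
  obtain ⟨v, hv⟩ := hdet.exists_right_inv
  obtain ⟨⟨a, r⟩, hr⟩ := IsLocalization.surj (Submonoid.powers q) v
  obtain ⟨k, hk0⟩ := r.2
  have hk : q ^ k = (r : A) := hk0
  have hfz : f (D.det * a - q ^ k) = 0 := by
    have h1 : f (D.det * a) = f (q ^ k) := by
      rw [map_mul]
      calc f D.det * f a = f D.det * (v * f r.1) := by rw [← hr]
        _ = (f D.det * v) * f r.1 := by ring
        _ = f r.1 := by rw [hv, one_mul]
        _ = f (q ^ k) := by rw [hk]
    rw [map_sub, h1, sub_self]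
  obtain ⟨ml, hml⟩ := (IsLocalization.map_eq_zero_iff (Submonoid.powers q)
    (Localization.Away q) _).mp hfz
  obtain ⟨l, hl0⟩ := ml.2
  have hl : q ^ l = (ml : A) := hl0
  have hu0 : D.det * (a * q ^ l) = q ^ (k + l) := by
    have : q ^ l * (D.det * a - q ^ k) = 0 := by rw [hl]; exact hml
    rw [pow_add]; linear_combination this
  obtain ⟨s, u, hu⟩ : ∃ s u, D.det * u = q ^ s := ⟨k + l, a * q ^ l, hu0⟩
  refine ⟨s + 1, Nat.succ_pos _, ?_⟩
  intro M hM
  have hM' : ∀ i j, (M : Matrix (Fin n) (Fin n) A) i j - (1 : Matrix (Fin n) (Fin n) A) i j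
      ∈ Ideal.span {q ^ (s + 1)} := by
    intro i j
    have := (mem_SLrel_iff' _ M).mp hM i j
    rwa [Ideal.span_singleton_pow] at this
  choose X hX using fun i j => Ideal.mem_span_singleton'.mp (hM' i j)
  set Xm : Matrix (Fin n) (Fin n) A := Matrix.of X with hXm
  have hMX : (M : Matrix (Fin n) (Fin n) A) = 1 + q ^ (s + 1) • Xm := by
    ext i j
    have := hX i j
    simp only [Matrix.add_apply, Matrix.smul_apply, smul_eq_mul, hXm, Matrix.of_apply]
    linear_combination (-1 : A) * this
  set N' : Matrix (Fin n) (Fin n) A := 1 + (q * u) • (D * Xm * D.adjugate) with hN'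
  have hadj : D * Xm * D.adjugate * D = D.det • (D * Xm) := by
    rw [Matrix.mul_assoc (D * Xm), Matrix.adjugate_mul, Matrix.mul_smul, Matrix.mul_one]
  have hscal : q * u * D.det = q ^ (s + 1) := by
    rw [mul_assoc, mul_comm u, hu, pow_succ]; ring
  have key : N' * D = D * (M : Matrix (Fin n) (Fin n) A) := by
    rw [hMX, hN', Matrix.mul_add, Matrix.mul_one, Matrix.mul_smul,
      Matrix.add_mul, Matrix.one_mul, Matrix.smul_mul, hadj, smul_smul, hscal]
  -- determinant of N' maps to 1 in the localization
  have hdd : IsUnit (f.mapMatrix D).det := (Matrix.isUnit_iff_isUnit_det _).mp hD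
  have hdetN'0 : f (N'.det - 1) = 0 := by
    have hmapkey : f.mapMatrix N' * f.mapMatrix D = f.mapMatrix D *
        f.mapMatrix (M : Matrix (Fin n) (Fin n) A) := by
      rw [← map_mul, ← map_mul, key]
    have h2 : (f.mapMatrix D).det * (f.mapMatrix N').det =
        (f.mapMatrix D).det * (f.mapMatrix (M : Matrix (Fin n) (Fin n) A)).det := by
      rw [mul_comm ((f.mapMatrix D).det), ← Matrix.det_mul, ← Matrix.det_mul, hmapkey]
    have h3 : (f.mapMatrix N').det = (f.mapMatrix (M : Matrix (Fin n) (Fin n) A)).det :=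
      hdd.mul_left_cancel h2
    have h4 : (f.mapMatrix (M : Matrix (Fin n) (Fin n) A)).det = 1 := by
      rw [← RingHom.map_det, M.2, map_one]
    rw [map_sub, map_one, RingHom.map_det, h3, h4, sub_self]
  obtain ⟨mt, hmt⟩ := (IsLocalization.map_eq_zero_iff (Submonoid.powers q)
    (Localization.Away q) _).mp hdetN'0
  obtain ⟨t, htt0⟩ := mt.2
  have htt : q ^ t = (mt : A) := htt0
  have hd0 : q ^ t * (N'.det - 1) = 0 := by rw [htt]; exact hmt
  set d := N'.det - 1 with hdd'
  -- index
  have hn0 : 0 < n := by omega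
  set i0 : Fin n := ⟨0, hn0⟩ with hi0
  set cof := N'.adjugate i0 i0 with hcof
  -- N' ≡ 1 mod q
  have hN'mod : ∀ i j, N' i j - (1 : Matrix (Fin n) (Fin n) A) i j ∈ Ideal.span {q} := by
    intro i j
    refine Ideal.mem_span_singleton'.mpr ⟨u * (D * Xm * D.adjugate) i j, ?_⟩
    simp only [hN', Matrix.add_apply, Matrix.smul_apply, smul_eq_mul]
    ring
  -- mod-q facts via the quotient
  set g := Ideal.Quotient.mk (Ideal.span {q}) with hg
  have hgN' : g.mapMatrix N' = 1 := by
    ext i j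
    simp only [RingHom.mapMatrix_apply, Matrix.map_apply]
    have := (Ideal.Quotient.eq (I := Ideal.span {q})).mpr (hN'mod i j)
    rw [this]
    simp [Matrix.one_apply, apply_ite g]
  have hdmem : d ∈ Ideal.span {q} := by
    have : g d = 0 := by
      rw [hdd', map_sub, map_one, RingHom.map_det, hgN', Matrix.det_one, sub_self]
    exact (Ideal.Quotient.eq_zero_iff_mem).mp this
  have hcofmem : 1 - cof ∈ Ideal.span {q} := by
    have : g (1 - cof) = 0 := by
      rw [map_sub, map_one, hcof]
      have : g (N'.adjugate i0 i0) = (g.mapMatrix N').adjugate i0 i0 := by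
        rw [← RingHom.map_adjugate]; rfl
      rw [this, hgN', Matrix.adjugate_one, Matrix.one_apply_eq, sub_self]
    exact (Ideal.Quotient.eq_zero_iff_mem).mp this
  obtain ⟨w, hw⟩ := Ideal.mem_span_singleton'.mp hcofmem
  -- the correction scalar
  set c := -d * ∑ i ∈ Finset.range t, (1 - cof) ^ i with hc
  have hdc : d * (1 - cof) ^ t = 0 := by
    rw [← hw, mul_pow]
    linear_combination (w ^ t) * hd0
  have hccof : c * cof = -d := by
    have h := geom_sum_mul (1 - cof) t
    rw [hc]
    linear_combination d * h + hdc
  have hcmem : c ∈ Ideal.span {q} := by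
    rw [hc]
    exact Ideal.mul_mem_right _ _ (neg_mem hdmem)
  have hqtc : q ^ t * c = 0 := by
    rw [hc]
    linear_combination (-(∑ i ∈ Finset.range t, (1 - cof) ^ i)) * hd0
  have hfc : f c = 0 := by
    have hun : IsUnit (f (q ^ t)) :=
      IsLocalization.map_units (M := Submonoid.powers q) (Localization.Away q) ⟨q ^ t, t, rfl⟩
    have : f (q ^ t) * f c = 0 := by rw [← map_mul, hqtc, map_zero]
    obtain ⟨vv, hvv⟩ := hun.exists_left_inv
    calc f c = vv * (f (q ^ t) * f c) := by rw [← mul_assoc, hvv, one_mul]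
      _ = 0 := by rw [this, mul_zero]
  -- the corrected matrix
  set N'' : Matrix (Fin n) (Fin n) A :=
    N'.updateRow i0 (N' i0 + c • (Pi.single i0 1 : Fin n → A)) with hN''
  have hdetN'' : N''.det = 1 := by
    rw [hN'', Matrix.det_updateRow_add, Matrix.det_updateRow_smul,
      Matrix.updateRow_eq_self, ← Matrix.adjugate_apply, ← hcof]
    have : N'.det = 1 + d := by rw [hdd']; ring
    rw [this]
    linear_combination hccof
  have hN''mod : ∀ i j, N'' i j - (1 : Matrix (Fin n) (Fin n) A) i j ∈ Ideal.span {q} := by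
    intro i j
    rw [hN'', Matrix.updateRow_apply]
    by_cases hij : i = i0
    · simp only [if_pos hij, Pi.add_apply, Pi.smul_apply, smul_eq_mul]
      have h1 : N' i0 j + c * (Pi.single i0 1 : Fin n → A) j - (1 : Matrix (Fin n) (Fin n) A) i j =
          (N' i j - (1 : Matrix (Fin n) (Fin n) A) i j) + c * (Pi.single i0 1 : Fin n → A) j := by
        rw [hij]; ring
      rw [h1]
      exact Ideal.add_mem _ (hN'mod i j) (Ideal.mul_mem_right _ _ hcmem)
    · simp only [if_neg hij]
      exact hN'mod i j
  have hfN'' : f.mapMatrix N'' = f.mapMatrix N' := by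
    ext i j
    simp only [RingHom.mapMatrix_apply, Matrix.map_apply]
    rw [hN'', Matrix.updateRow_apply]
    by_cases hij : i = i0
    · simp only [if_pos hij, Pi.add_apply, Pi.smul_apply, smul_eq_mul]
      rw [map_add, map_mul, hfc, zero_mul, add_zero, hij]
    · simp only [if_neg hij]
  refine ⟨⟨N'', hdetN''⟩, (mem_SLrel_iff' _ _).mpr hN''mod, ?_⟩
  show f.mapMatrix (D * (M : Matrix (Fin n) (Fin n) A)) = f.mapMatrix (N'' * D)
  calc f.mapMatrix (D * (M : Matrix (Fin n) (Fin n) A)) = f.mapMatrix (N' * D) := by rw [key]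
    _ = f.mapMatrix N' * f.mapMatrix D := map_mul _ _ _
    _ = f.mapMatrix N'' * f.mapMatrix D := by rw [hfN'']
    _ = f.mapMatrix (N'' * D) := (map_mul _ _ _).symm
end

section
/- (Lemma 5.3(ii) of the paper) Let A be a Dedekind domain, n ≥ 3, let q ∈ A be a nonzero element generating a proper principal ideal 𝔮 = qA, and let D ∈ Mat_n(A) be a matrix whose determinant divides some power of q in A (equivalently, D becomes invertible over the localization A[1/q]). Then there exists an integer l > 0 such that for every M ∈ E_n(A, 𝔮^l) there exists N ∈ E_n(A, 𝔮) with D·M = N·D in Mat_n(A) (that is, D^{-1}·E_n(A,𝔮)·D ⊇ E_n(A,𝔮^l)). -/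
open Matrix

section Aux

variable {n : ℕ} {A : Type*} [CommRing A]

/-- product of two rank-one matrices -/
lemma vmv_mul_vmv (u w v x : Fin n → A) :
    vecMulVec u w * vecMulVec v x = (w ⬝ᵥ v) • vecMulVec u x := by
  ext p r
  simp only [Matrix.mul_apply, vecMulVec_apply, Matrix.smul_apply, dotProduct,
    smul_eq_mul, Finset.sum_mul]
  exact Finset.sum_congr rfl fun k _ => by ring

lemma vmv_add_left (u v w : Fin n → A) :
    vecMulVec u w + vecMulVec v w = vecMulVec (u + v) w := by
  ext p r; simp [vecMulVec_apply, add_mul]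

lemma vmv_add_right (u v w : Fin n → A) :
    vecMulVec u v + vecMulVec u w = vecMulVec u (v + w) := by
  ext p r; simp [vecMulVec_apply, mul_add]

lemma vmv_smul_right (c : A) (u w : Fin n → A) :
    vecMulVec u (c • w) = c • vecMulVec u w := by
  ext p r; simp [vecMulVec_apply]; ring

lemma mul_std_mul (i j : Fin n) (M N : Matrix (Fin n) (Fin n) A) :
    M * Matrix.single i j (1 : A) * N = vecMulVec (fun p => M p i) (fun r => N j r) := by
  have h1 : Matrix.single i j (1 : A) * N = vecMulVec (Pi.single i 1) (fun r => N j r) := by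
    ext k r
    simp only [Matrix.mul_apply, Matrix.single, of_apply, vecMulVec_apply, Pi.single_apply]
    rw [Finset.sum_eq_single j]
    · have he : (i = k ∧ j = j) ↔ (k = i) :=
        ⟨fun h => h.1.symm, fun h => ⟨h.symm, rfl⟩⟩
      rw [if_congr he rfl rfl]
    · intro b _ hb; simp [hb, Ne.symm hb]
    · simp
  rw [Matrix.mul_assoc, h1]
  ext p r
  simp only [Matrix.mul_apply, vecMulVec_apply, Pi.single_apply]
  rw [Finset.sum_eq_single i] <;> simp +contextual

/-- the commutator identity `(1+P)(1+Q)(1-P)(1-Q) = 1 + PQ` -/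
lemma comm_identity (P Q : Matrix (Fin n) (Fin n) A)
    (hP : P * P = 0) (hQ : Q * Q = 0) (hQP : Q * P = 0) :
    (1 + P) * (1 + Q) * ((1 - P) * (1 - Q)) = 1 + P * Q := by
  have h1 : (1 + P) * (1 + Q) = 1 + (P + Q) + P * Q := by noncomm_ring
  have h2 : (1 - P) * (1 - Q) = 1 - (P + Q) + P * Q := by noncomm_ring
  have hSS : (P + Q) * (P + Q) = P * Q + (P*P + (Q*P + Q*Q)) := by noncomm_ring
  rw [hP, hQ, hQP] at hSS
  simp only [add_zero] at hSS
  have hST : (P + Q) * (P * Q) = P*P*Q + Q*P*Q := by noncomm_ring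
  rw [hP, hQP] at hST
  simp only [zero_mul, mul_zero, add_zero, zero_add] at hST
  have hTS : (P * Q) * (P + Q) = P*(Q*P) + P*(Q*Q) := by noncomm_ring
  rw [hQ, hQP] at hTS
  simp only [mul_zero, add_zero] at hTS
  have hTT : (P * Q) * (P * Q) = P*(Q*P)*Q := by noncomm_ring
  rw [hQP] at hTT
  simp only [mul_zero, zero_mul] at hTT
  have expand : (1 + (P+Q) + P*Q) * (1 - (P+Q) + P*Q)
      = 1 + P*Q + (P*Q - (P+Q)*(P+Q)) + ((P+Q)*(P*Q) + (P*Q)*(P*Q) - (P*Q)*(P+Q)) := by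
    noncomm_ring
  rw [h1, h2, expand, hSS, hST, hTS, hTT]
  abel

end Aux

section Groups

variable {n : ℕ} {A : Type*} [CommRing A]

lemma std_eq_vmv (i j : Fin n) (c : A) :
    Matrix.single i j c = vecMulVec (Pi.single i c) (Pi.single j 1) := by
  ext p r
  simp only [Matrix.single, of_apply, vecMulVec_apply, Pi.single_apply]
  by_cases hp : p = i
  · by_cases hr : r = j
    · simp [hp, hr]
    · have hr' : ¬ j = r := fun h => hr h.symm
      simp [hp, hr, hr']
  · have hp' : ¬ i = p := fun h => hp h.symm
    by_cases hr : r = j <;> simp [hp, hp', hr]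

lemma det_one_add_std {i j : Fin n} (hij : i ≠ j) (a : A) :
    (1 + Matrix.single i j a).det = 1 := by
  have h : (1 : Matrix (Fin n) (Fin n) A) + Matrix.single i j a
      = Matrix.transvection i j a := rfl
  rw [h, Matrix.det_transvection_of_ne i j hij a]

/-- an elementary matrix as an element of `SL_n`. -/
def elemSL (i j : Fin n) (hij : i ≠ j) (a : A) : Matrix.SpecialLinearGroup (Fin n) A :=
  ⟨1 + Matrix.single i j a, det_one_add_std hij a⟩

lemma elemSL_mem_Fn {I : Ideal A} {i j : Fin n} (hij : i ≠ j) {a : A} (ha : a ∈ I) :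
    elemSL i j hij a ∈ Fn n A I :=
  Subgroup.subset_closure ⟨i, j, hij, a, ha, rfl⟩

lemma Fn_top_eq_En : Fn n A ⊤ = En n A := by
  unfold Fn En
  rw [Submodule.top_coe]

lemma Fn_le_EnRel (I : Ideal A) : Fn n A I ≤ EnRel n A I := by
  rw [Fn]
  refine (Subgroup.closure_le _).mpr fun f hf => ?_
  exact Subgroup.subset_closure
    ⟨1, (En n A).one_mem, f, Subgroup.subset_closure hf, by group⟩

lemma conj_mem_EnRel {I : Ideal A} {g f : Matrix.SpecialLinearGroup (Fin n) A}
    (hg : g ∈ En n A) (hf : f ∈ Fn n A I) : g * f * g⁻¹ ∈ EnRel n A I :=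
  Subgroup.subset_closure ⟨g, hg, f, hf, rfl⟩

/-- `1 + u eₘᵀ` with `uₘ = 0` and entries in `I` is in `Fn I`. -/
lemma col_mem (I : Ideal A) (m : Fin n) (u : Fin n → A) (hum : u m = 0)
    (hu : ∀ p, u p ∈ I) :
    ∃ Y ∈ Fn n A I,
      (Y : Matrix (Fin n) (Fin n) A) = 1 + vecMulVec u (Pi.single m 1) := by
  have key : ∀ s : Finset (Fin n), ∃ Y ∈ Fn n A I,
      (Y : Matrix (Fin n) (Fin n) A)
        = 1 + vecMulVec (fun p => if p ∈ s then u p else 0) (Pi.single m 1) := by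
    intro s
    induction s using Finset.induction_on with
    | empty =>
      refine ⟨1, one_mem _, ?_⟩
      have h0 : (fun p => if p ∈ (∅ : Finset (Fin n)) then u p else 0) = (0 : Fin n → A) := by
        funext p; simp
      have h1 : vecMulVec (0 : Fin n → A) (Pi.single m (1:A)) = 0 := by
        ext p r; simp [vecMulVec_apply]
      rw [h0, h1, add_zero]
      rfl
    | @insert p₀ s hp₀ ih =>
      obtain ⟨Y, hY, hYc⟩ := ih
      by_cases hpm : p₀ = m
      · refine ⟨Y, hY, ?_⟩
        have hmask : (fun p => if p ∈ insert p₀ s then u p else 0)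
            = (fun p => if p ∈ s then u p else 0) := by
          funext p
          by_cases hps : p ∈ s
          · simp [hps]
          · by_cases hpp : p = p₀
            · simp [hpp, hps, hpm, hum]
            · simp [hps, hpp]
        rw [hYc, hmask]
      · refine ⟨elemSL p₀ m hpm (u p₀) * Y,
          mul_mem (elemSL_mem_Fn hpm (hu p₀)) hY, ?_⟩
        rw [Matrix.SpecialLinearGroup.coe_mul, hYc]
        show (1 + Matrix.single p₀ m (u p₀)) * _ = _
        rw [std_eq_vmv]
        set us : Fin n → A := fun p => if p ∈ s then u p else 0 with hus
        have husm : us m = 0 := by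
          simp only [hus]
          by_cases hms : m ∈ s <;> simp [hms, hum]
        have cross : vecMulVec (Pi.single p₀ (u p₀)) (Pi.single m 1) *
            vecMulVec us (Pi.single m (1:A)) = 0 := by
          rw [vmv_mul_vmv]
          have : Pi.single m (1:A) ⬝ᵥ us = 0 := by
            simp [dotProduct, Pi.single_apply, husm]
          rw [this, zero_smul]
        have sum_eq : Pi.single p₀ (u p₀) + us
            = fun p => if p ∈ insert p₀ s then u p else 0 := by
          funext p
          by_cases hpp : p = p₀
          · subst hpp
            simp [hus, hp₀, Pi.single_apply]
          · simp [hus, Pi.single_apply, hpp, Finset.mem_insert]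
        calc (1 + vecMulVec (Pi.single p₀ (u p₀)) (Pi.single m 1)) *
              (1 + vecMulVec us (Pi.single m 1))
            = 1 + (vecMulVec (Pi.single p₀ (u p₀)) (Pi.single m 1)
                + vecMulVec us (Pi.single m 1))
              + vecMulVec (Pi.single p₀ (u p₀)) (Pi.single m 1) *
                vecMulVec us (Pi.single m 1) := by noncomm_ring
          _ = 1 + vecMulVec (fun p => if p ∈ insert p₀ s then u p else 0)
                (Pi.single m 1) := by
              rw [cross, add_zero, vmv_add_left, sum_eq]
  obtain ⟨Y, hY, hYc⟩ := key Finset.univ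
  refine ⟨Y, hY, ?_⟩
  have huniv : (fun p => if p ∈ (Finset.univ : Finset (Fin n)) then u p else 0) = u := by
    funext p; simp
  rw [hYc, huniv]

/-- `1 + eₘ wᵀ` with `wₘ = 0` and entries in `I` is in `Fn I`. -/
lemma row_mem (I : Ideal A) (m : Fin n) (w : Fin n → A) (hwm : w m = 0)
    (hw : ∀ p, w p ∈ I) :
    ∃ Y ∈ Fn n A I,
      (Y : Matrix (Fin n) (Fin n) A) = 1 + vecMulVec (Pi.single m 1) w := by
  have key : ∀ s : Finset (Fin n), ∃ Y ∈ Fn n A I,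
      (Y : Matrix (Fin n) (Fin n) A)
        = 1 + vecMulVec (Pi.single m 1) (fun p => if p ∈ s then w p else 0) := by
    intro s
    induction s using Finset.induction_on with
    | empty =>
      refine ⟨1, one_mem _, ?_⟩
      have h0 : (fun p => if p ∈ (∅ : Finset (Fin n)) then w p else 0) = (0 : Fin n → A) := by
        funext p; simp
      have h1 : vecMulVec (Pi.single m (1:A)) (0 : Fin n → A) = 0 := by
        ext p r; simp [vecMulVec_apply]
      rw [h0, h1, add_zero]
      rfl
    | @insert p₀ s hp₀ ih =>
      obtain ⟨Y, hY, hYc⟩ := ih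
      by_cases hpm : p₀ = m
      · refine ⟨Y, hY, ?_⟩
        have hmask : (fun p => if p ∈ insert p₀ s then w p else 0)
            = (fun p => if p ∈ s then w p else 0) := by
          funext p
          by_cases hps : p ∈ s
          · simp [hps]
          · by_cases hpp : p = p₀
            · simp [hpp, hps, hpm, hwm]
            · simp [hps, hpp]
        rw [hYc, hmask]
      · have hmp : m ≠ p₀ := fun h => hpm h.symm
        refine ⟨elemSL m p₀ hmp (w p₀) * Y,
          mul_mem (elemSL_mem_Fn hmp (hw p₀)) hY, ?_⟩
        rw [Matrix.SpecialLinearGroup.coe_mul, hYc]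
        show (1 + Matrix.single m p₀ (w p₀)) * _ = _
        rw [std_eq_vmv]
        set ws : Fin n → A := fun p => if p ∈ s then w p else 0 with hws
        have hwsm : ws m = 0 := by
          simp only [hws]
          by_cases hms : m ∈ s <;> simp [hms, hwm]
        have cross : vecMulVec (Pi.single m (w p₀)) (Pi.single p₀ 1) *
            vecMulVec (Pi.single m (1:A)) ws = 0 := by
          rw [vmv_mul_vmv]
          have : Pi.single p₀ (1:A) ⬝ᵥ Pi.single m 1 = 0 := by
            simp [dotProduct, Pi.single_apply, hmp]
          rw [this, zero_smul]
        have left_eq : vecMulVec (Pi.single m (w p₀)) (Pi.single p₀ (1:A))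
            = vecMulVec (Pi.single m (1:A)) (Pi.single p₀ (w p₀)) := by
          ext p r
          simp only [vecMulVec_apply, Pi.single_apply]
          by_cases hp : p = m <;> by_cases hr : r = p₀ <;> simp [hp, hr]
        have sum_eq : Pi.single p₀ (w p₀) + ws
            = fun p => if p ∈ insert p₀ s then w p else 0 := by
          funext p
          by_cases hpp : p = p₀
          · subst hpp
            simp [hws, hp₀, Pi.single_apply]
          · simp [hws, Pi.single_apply, hpp, Finset.mem_insert]
        calc (1 + vecMulVec (Pi.single m (w p₀)) (Pi.single p₀ 1)) *
              (1 + vecMulVec (Pi.single m 1) ws)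
            = 1 + (vecMulVec (Pi.single m (w p₀)) (Pi.single p₀ 1)
                + vecMulVec (Pi.single m 1) ws)
              + vecMulVec (Pi.single m (w p₀)) (Pi.single p₀ 1) *
                vecMulVec (Pi.single m 1) ws := by noncomm_ring
          _ = 1 + vecMulVec (Pi.single m 1)
                (fun p => if p ∈ insert p₀ s then w p else 0) := by
              rw [cross, add_zero, left_eq, vmv_add_right, sum_eq]
  obtain ⟨Y, hY, hYc⟩ := key Finset.univ
  refine ⟨Y, hY, ?_⟩
  have huniv : (fun p => if p ∈ (Finset.univ : Finset (Fin n)) then w p else 0) = w := by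
    funext p; simp
  rw [hYc, huniv]

end Groups

section Transvections

variable {n : ℕ} {A : Type*} [CommRing A]

lemma single_dot (m : Fin n) (u : Fin n → A) : Pi.single m (1:A) ⬝ᵥ u = u m := by
  simp [dotProduct, Pi.single_apply]

lemma dot_single (m : Fin n) (u : Fin n → A) : u ⬝ᵥ Pi.single m (1:A) = u m := by
  simp [dotProduct, Pi.single_apply]

lemma sl_inv_eq {Y Z : Matrix.SpecialLinearGroup (Fin n) A}
    (h : (Y : Matrix (Fin n) (Fin n) A) * (Z : Matrix (Fin n) (Fin n) A) = 1) :
    Y⁻¹ = Z := by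
  have h1 : Y * Z = 1 := Subtype.ext (by
    rw [Matrix.SpecialLinearGroup.coe_mul, h]; rfl)
  exact inv_eq_of_mul_eq_one_right h1

/-- `1 + u wᵀ ∈ EnRel I` when `u, w` share a zero coordinate, `w ⬝ᵥ u = 0`
and the entries of `w` lie in `I`. -/
lemma transvection_mem (I : Ideal A) (m : Fin n) (u w : Fin n → A)
    (hum : u m = 0) (hwm : w m = 0) (hwu : w ⬝ᵥ u = 0) (hw : ∀ p, w p ∈ I) :
    ∃ Y ∈ EnRel n A I, (Y : Matrix (Fin n) (Fin n) A) = 1 + vecMulVec u w := by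
  obtain ⟨gP, hgP, hgPc⟩ := col_mem (⊤ : Ideal A) m u hum (fun p => trivial)
  obtain ⟨gP', _, hgP'c⟩ := col_mem (⊤ : Ideal A) m (-u) (by simp [hum]) (fun p => trivial)
  obtain ⟨gQ, hgQ, hgQc⟩ := row_mem I m w hwm hw
  obtain ⟨gQ', _, hgQ'c⟩ := row_mem I m (-w) (by simp [hwm]) (fun p => neg_mem (hw p))
  set P := vecMulVec u (Pi.single m (1:A)) with hP
  set Q := vecMulVec (Pi.single m (1:A)) w with hQ
  have hP'c : (gP' : Matrix (Fin n) (Fin n) A) = 1 - P := by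
    rw [hgP'c]
    have : vecMulVec (-u) (Pi.single m (1:A)) = -P := by
      ext p r; simp [vecMulVec_apply, hP]
    rw [this]; abel
  have hQ'c : (gQ' : Matrix (Fin n) (Fin n) A) = 1 - Q := by
    rw [hgQ'c]
    have : vecMulVec (Pi.single m (1:A)) (-w) = -Q := by
      ext p r; simp [vecMulVec_apply, hQ]
    rw [this]; abel
  have hPP : P * P = 0 := by
    rw [hP, vmv_mul_vmv, single_dot, hum, zero_smul]
  have hQQ : Q * Q = 0 := by
    rw [hQ, vmv_mul_vmv, dot_single]
    have : w m = (0:A) := hwm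
    rw [this, zero_smul]
  have hQP : Q * P = 0 := by
    rw [hQ, hP, vmv_mul_vmv, hwu, zero_smul]
  have hPQ : P * Q = vecMulVec u w := by
    rw [hP, hQ, vmv_mul_vmv, single_dot]
    simp
  have hinvP : gP⁻¹ = gP' := by
    apply sl_inv_eq
    rw [hgPc, hP'c]
    have : (1 + P) * (1 - P) = 1 - P * P := by noncomm_ring
    rw [this, hPP, sub_zero]
  have hinvQ : gQ⁻¹ = gQ' := by
    apply sl_inv_eq
    rw [hgQc, hQ'c]
    have : (1 + Q) * (1 - Q) = 1 - Q * Q := by noncomm_ring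
    rw [this, hQQ, sub_zero]
  have hgPEn : gP ∈ En n A := by rw [← Fn_top_eq_En]; exact hgP
  refine ⟨gP * gQ * gP⁻¹ * gQ⁻¹, ?_, ?_⟩
  · exact mul_mem (conj_mem_EnRel hgPEn hgQ) ((Fn_le_EnRel I) (inv_mem hgQ))
  · rw [Matrix.SpecialLinearGroup.coe_mul, Matrix.SpecialLinearGroup.coe_mul,
      Matrix.SpecialLinearGroup.coe_mul, hinvP, hinvQ, hgPc, hgQc, hP'c, hQ'c]
    rw [mul_assoc ((1+P) * (1+Q)) (1-P) (1-Q), comm_identity P Q hPP hQQ hQP, hPQ]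

/-- the Koszul transvections `1 + β v (v_j e_k - v_k e_j)ᵀ` lie in `EnRel I` for `β ∈ I`. -/
lemma koszul_mem (hn : 3 ≤ n) (I : Ideal A) (v : Fin n → A) (j k : Fin n) (hjk : j ≠ k)
    (β : A) (hβ : β ∈ I) :
    ∃ Y ∈ EnRel n A I, (Y : Matrix (Fin n) (Fin n) A)
      = 1 + vecMulVec v (β • (v j • (Pi.single k 1 : Fin n → A) - v k • (Pi.single j 1 : Fin n → A))) := by
  set w : Fin n → A := β • (v j • (Pi.single k 1 : Fin n → A) - v k • (Pi.single j 1 : Fin n → A)) with hwdef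
  have hwp : ∀ p, w p = β * (v j * (if p = k then 1 else 0)
      - v k * (if p = j then 1 else 0)) := by
    intro p
    simp [hwdef, Pi.single_apply, mul_sub]
  have hwI : ∀ p, w p ∈ I := fun p => by rw [hwp p]; exact I.mul_mem_right _ hβ
  have hwv : w ⬝ᵥ v = 0 := by
    simp only [dotProduct]
    have hterm : ∀ p ∈ Finset.univ, w p * v p
        = (if p = k then β * v j * v p else 0) - (if p = j then β * v k * v p else 0) := by
      intro p _
      rw [hwp]
      by_cases h1 : p = k
      · by_cases h2 : p = j
        · exact absurd (h2.symm.trans h1) hjk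
        · simp [h1, h2, Ne.symm hjk]
      · by_cases h2 : p = j
        · simp [h1, h2, hjk]
        · simp [h1, h2]
    rw [Finset.sum_congr rfl hterm, Finset.sum_sub_distrib,
      Finset.sum_ite_eq' Finset.univ k, Finset.sum_ite_eq' Finset.univ j]
    simp
    ring
  obtain ⟨m, hmj, hmk⟩ : ∃ m : Fin n, m ≠ j ∧ m ≠ k := by
    have hnonempty : (({j, k} : Finset (Fin n))ᶜ).Nonempty := by
      rw [← Finset.card_pos, Finset.card_compl]
      have h2 : ({j, k} : Finset (Fin n)).card ≤ 2 :=
        (Finset.card_insert_le _ _).trans (by simp)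
      have h3 : Fintype.card (Fin n) = n := Fintype.card_fin n
      omega
    obtain ⟨m, hm⟩ := hnonempty
    rw [Finset.mem_compl, Finset.mem_insert, Finset.mem_singleton] at hm
    push_neg at hm
    exact ⟨m, hm.1, hm.2⟩
  have hwm : w m = 0 := by rw [hwp]; simp [hmj, hmk]
  set u' : Fin n → A := fun p => if p = m then 0 else v p with hu'def
  have hu'm : u' m = 0 := by simp [hu'def]
  have hwu' : w ⬝ᵥ u' = 0 := by
    have : w ⬝ᵥ u' = w ⬝ᵥ v := by
      simp only [dotProduct]
      apply Finset.sum_congr rfl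
      intro p _
      by_cases hp : p = m
      · subst hp; rw [hwm]; simp
      · simp [hu'def, hp]
    rw [this, hwv]
  obtain ⟨Y₂, hY₂, hY₂c⟩ := transvection_mem I m u' w hu'm hwm hwu' hwI
  obtain ⟨Y₁, hY₁, hY₁c⟩ := row_mem I m (v m • w)
    (by simp [hwm]) (fun p => I.mul_mem_left _ (hwI p))
  refine ⟨Y₁ * Y₂, mul_mem ((Fn_le_EnRel I) hY₁) hY₂, ?_⟩
  rw [Matrix.SpecialLinearGroup.coe_mul, hY₁c, hY₂c]
  have cross : vecMulVec (Pi.single m 1) (v m • w) * vecMulVec u' w = 0 := by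
    rw [vmv_mul_vmv]
    have : (v m • w) ⬝ᵥ u' = 0 := by
      rw [smul_dotProduct, hwu', smul_zero]
    rw [this, zero_smul]
  have sum_eq : vecMulVec (Pi.single m 1) (v m • w) + vecMulVec u' w = vecMulVec v w := by
    ext p r
    simp only [Matrix.add_apply, vecMulVec_apply, Pi.single_apply, Pi.smul_apply,
      smul_eq_mul]
    by_cases hp : p = m
    · subst hp; simp [hu'def]
    · simp [hp, hu'def]
  calc (1 + vecMulVec (Pi.single m 1) (v m • w)) * (1 + vecMulVec u' w)
      = 1 + (vecMulVec (Pi.single m 1) (v m • w) + vecMulVec u' w)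
        + vecMulVec (Pi.single m 1) (v m • w) * vecMulVec u' w := by noncomm_ring
    _ = 1 + vecMulVec v w := by rw [cross, add_zero, sum_eq]

end Transvections

section KoszulDot

variable {n : ℕ} {A : Type*} [CommRing A]

lemma koszul_dot (v : Fin n → A) (j k : Fin n) (β : A) :
    (β • (v j • (Pi.single k 1 : Fin n → A) - v k • (Pi.single j 1 : Fin n → A))) ⬝ᵥ v
      = 0 := by
  rw [smul_dotProduct, sub_dotProduct, smul_dotProduct, smul_dotProduct,
    single_dot, single_dot]
  simp only [smul_eq_mul]
  ring_nf

end KoszulDot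

lemma inv_step_mat {n : ℕ} {A : Type*} [CommRing A] (D X Xi Nm Ni : Matrix (Fin n) (Fin n) A)
    (hX : X * Xi = 1) (hN : Ni * Nm = 1) (e₁ : D * X = Nm * D) : D * Xi = Ni * D := by
  calc D * Xi = (Ni * Nm) * (D * Xi) := by rw [hN, one_mul]
    _ = Ni * ((Nm * D) * Xi) := by noncomm_ring
    _ = Ni * ((D * X) * Xi) := by rw [e₁]
    _ = Ni * (D * (X * Xi)) := by rw [mul_assoc]
    _ = Ni * D := by rw [hX, mul_one]

/-- **Lemma 5.3(ii) of the paper.** Let `A` be a Dedekind domain, `n ≥ 3`,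
`q ∈ A` a nonzero element generating a proper principal ideal `𝔮 = qA`, and
`D ∈ Mat_n(A)` a matrix whose determinant divides a power of `q` (so `D` is
invertible over `A[1/q]`). Then there exists `l > 0` such that
`D⁻¹ · E_n(A,𝔮) · D ⊇ E_n(A,𝔮^l)`, i.e. every `M ∈ E_n(A,𝔮^l)` satisfies
`D·M = N·D` in `Mat_n(A)` for some `N ∈ E_n(A,𝔮)`. -/
theorem conj_EnRel (A : Type*) [CommRing A] [IsDedekindDomain A] (n : ℕ) (hn : 3 ≤ n)
    (q : A) (hq0 : q ≠ 0) (hq : Ideal.span {q} ≠ ⊤)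
    (D : Matrix (Fin n) (Fin n) A) (hD : ∃ e : ℕ, D.det ∣ q ^ e) :
    ∃ l : ℕ, 0 < l ∧
      ∀ M ∈ EnRel n A (Ideal.span {q} ^ l), ∃ N ∈ EnRel n A (Ideal.span {q}),
        D * (M : Matrix (Fin n) (Fin n) A) = (N : Matrix (Fin n) (Fin n) A) * D := by
  obtain ⟨e, t, ht⟩ := hD
  refine ⟨2 * e + 1, Nat.succ_pos _, ?_⟩
  intro M hM
  rw [EnRel] at hM
  induction hM using Subgroup.closure_induction with
  | one =>
    exact ⟨1, one_mem _, by
      rw [Matrix.SpecialLinearGroup.coe_one, mul_one, one_mul]⟩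
  | mul x y hx hy ihx ihy =>
    obtain ⟨N₁, hN₁, e₁⟩ := ihx
    obtain ⟨N₂, hN₂, e₂⟩ := ihy
    refine ⟨N₁ * N₂, mul_mem hN₁ hN₂, ?_⟩
    rw [Matrix.SpecialLinearGroup.coe_mul, Matrix.SpecialLinearGroup.coe_mul,
      ← mul_assoc, e₁, mul_assoc, e₂, ← mul_assoc]
  | inv x hx ihx =>
    obtain ⟨N, hN, e₁⟩ := ihx
    refine ⟨N⁻¹, inv_mem hN, ?_⟩
    have hx1 : (x : Matrix (Fin n) (Fin n) A) * ((x⁻¹ : Matrix.SpecialLinearGroup (Fin n) A) : Matrix (Fin n) (Fin n) A)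
        = 1 := by
      rw [← Matrix.SpecialLinearGroup.coe_mul, mul_inv_cancel,
        Matrix.SpecialLinearGroup.coe_one]
    have hN1 : ((N⁻¹ : Matrix.SpecialLinearGroup (Fin n) A) : Matrix (Fin n) (Fin n) A) * (N : Matrix (Fin n) (Fin n) A)
        = 1 := by
      rw [← Matrix.SpecialLinearGroup.coe_mul, inv_mul_cancel,
        Matrix.SpecialLinearGroup.coe_one]
    exact inv_step_mat D _ _ _ _ hx1 hN1 e₁
  | mem x hx =>
    obtain ⟨g, hg, f, hf, rfl⟩ := hx
    rw [Fn] at hf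
    induction hf using Subgroup.closure_induction with
    | one =>
      refine ⟨1, one_mem _, ?_⟩
      have h1 : g * 1 * g⁻¹ = 1 := by group
      rw [h1, Matrix.SpecialLinearGroup.coe_one, mul_one, one_mul]
    | mul f₁ f₂ hf₁ hf₂ ih₁ ih₂ =>
      obtain ⟨N₁, hN₁, e₁⟩ := ih₁
      obtain ⟨N₂, hN₂, e₂⟩ := ih₂
      refine ⟨N₁ * N₂, mul_mem hN₁ hN₂, ?_⟩
      have hsplit : g * (f₁ * f₂) * g⁻¹ = (g * f₁ * g⁻¹) * (g * f₂ * g⁻¹) := by group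
      rw [hsplit, Matrix.SpecialLinearGroup.coe_mul (g * f₁ * g⁻¹) (g * f₂ * g⁻¹),
        Matrix.SpecialLinearGroup.coe_mul N₁ N₂,
        ← mul_assoc, e₁, mul_assoc, e₂, ← mul_assoc]
    | inv f₁ hf₁ ih₁ =>
      obtain ⟨N, hN, e₁⟩ := ih₁
      refine ⟨N⁻¹, inv_mem hN, ?_⟩
      have hsplit : g * f₁⁻¹ * g⁻¹ = (g * f₁ * g⁻¹)⁻¹ := by group
      rw [hsplit]
      set x := g * f₁ * g⁻¹ with hxdef
      have hx1 : (x : Matrix (Fin n) (Fin n) A) * ((x⁻¹ : Matrix.SpecialLinearGroup (Fin n) A) : Matrix (Fin n) (Fin n) A)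
          = 1 := by
        rw [← Matrix.SpecialLinearGroup.coe_mul, mul_inv_cancel,
          Matrix.SpecialLinearGroup.coe_one]
      have hN1 : ((N⁻¹ : Matrix.SpecialLinearGroup (Fin n) A) : Matrix (Fin n) (Fin n) A) * (N : Matrix (Fin n) (Fin n) A)
          = 1 := by
        rw [← Matrix.SpecialLinearGroup.coe_mul, inv_mul_cancel,
          Matrix.SpecialLinearGroup.coe_one]
      exact inv_step_mat D _ _ _ _ hx1 hN1 e₁
    | mem f hfS =>
      obtain ⟨i, j, hij, a, haS, hfc⟩ := hfS
      have ha : a ∈ (Ideal.span {q}) ^ (2 * e + 1) := haS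
      rw [Ideal.span_singleton_pow, Ideal.mem_span_singleton] at ha
      obtain ⟨b, hb⟩ := ha
      -- notation
      set G : Matrix (Fin n) (Fin n) A := (g : Matrix (Fin n) (Fin n) A) with hG
      set G' : Matrix (Fin n) (Fin n) A := (↑(g⁻¹) : Matrix (Fin n) (Fin n) A) with hG'
      have hGG' : G * G' = 1 := by
        rw [hG, hG', ← Matrix.SpecialLinearGroup.coe_mul, mul_inv_cancel,
          Matrix.SpecialLinearGroup.coe_one]
      have hG'G : G' * G = 1 := by
        rw [hG, hG', ← Matrix.SpecialLinearGroup.coe_mul, inv_mul_cancel,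
          Matrix.SpecialLinearGroup.coe_one]
      set v : Fin n → A := fun p => (D * G) p i with hv
      set w : Fin n → A := fun r => (G' * adjugate D) j r with hw
      set lam : Fin n → A := fun p => (G' * adjugate D) i p with hlam
      set c' : A := q * (t * t * b) with hc'
      set c : A := c' * D.det with hc
      have hBig : (G' * adjugate D) * (D * G) = D.det • (1 : Matrix (Fin n) (Fin n) A) := by
        calc (G' * adjugate D) * (D * G)
            = G' * (adjugate D * D) * G := by noncomm_ring
          _ = G' * (D.det • (1 : Matrix (Fin n) (Fin n) A)) * G := by
              rw [Matrix.adjugate_mul]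
          _ = D.det • (G' * G) := by
              rw [Matrix.mul_smul, mul_one, Matrix.smul_mul]
          _ = D.det • (1 : Matrix (Fin n) (Fin n) A) := by rw [hG'G]
      have hwv : w ⬝ᵥ v = 0 := by
        have h1 : w ⬝ᵥ v = ((G' * adjugate D) * (D * G)) j i := by
          rw [Matrix.mul_apply]
          simp only [dotProduct, hw, hv]
        rw [h1, hBig]
        simp [Matrix.smul_apply, Matrix.one_apply, Ne.symm hij]
      have hlamv : lam ⬝ᵥ v = D.det := by
        have h1 : lam ⬝ᵥ v = ((G' * adjugate D) * (D * G)) i i := by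
          rw [Matrix.mul_apply]
          simp only [dotProduct, hlam, hv]
        rw [h1, hBig]
        simp [Matrix.smul_apply, Matrix.one_apply]
      have hc'mem : c' ∈ Ideal.span {q} := by
        rw [Ideal.mem_span_singleton, hc']
        exact ⟨t * t * b, rfl⟩
      set μ : Fin n × Fin n → (Fin n → A) := fun pr =>
        (c' * lam pr.1 * w pr.2) • (v pr.1 • (Pi.single pr.2 1 : Fin n → A)
          - v pr.2 • (Pi.single pr.1 1 : Fin n → A)) with hμ
      have hμdot : ∀ pr : Fin n × Fin n, μ pr ⬝ᵥ v = 0 := fun pr =>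
        koszul_dot v pr.1 pr.2 _
      have hterm : ∀ pr : Fin n × Fin n, ∃ Y ∈ EnRel n A (Ideal.span {q}),
          (Y : Matrix (Fin n) (Fin n) A) = 1 + vecMulVec v (μ pr) := by
        rintro ⟨p, r⟩
        by_cases hpr : p = r
        · refine ⟨1, one_mem _, ?_⟩
          have h0 : μ (p, r) = 0 := by
            subst hpr
            simp [hμ]
          have h1 : vecMulVec v (0 : Fin n → A) = 0 := by
            ext p' r'; simp [vecMulVec_apply]
          rw [h0, h1, add_zero, Matrix.SpecialLinearGroup.coe_one]
        · exact koszul_mem hn _ v p r hpr _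
            ((Ideal.span {q}).mul_mem_right (w r)
              ((Ideal.span {q}).mul_mem_right (lam p) hc'mem))
      have main : ∀ s : Finset (Fin n × Fin n), ∃ Y ∈ EnRel n A (Ideal.span {q}),
          (Y : Matrix (Fin n) (Fin n) A) = 1 + vecMulVec v (∑ pr ∈ s, μ pr) := by
        intro s
        induction s using Finset.induction_on with
        | empty =>
          refine ⟨1, one_mem _, ?_⟩
          have h1 : vecMulVec v (0 : Fin n → A) = 0 := by
            ext p' r'; simp [vecMulVec_apply]
          rw [Finset.sum_empty, h1, add_zero, Matrix.SpecialLinearGroup.coe_one]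
        | @insert pr s hprs ih =>
          obtain ⟨Y, hY, hYc⟩ := ih
          obtain ⟨Yt, hYt, hYtc⟩ := hterm pr
          refine ⟨Y * Yt, mul_mem hY hYt, ?_⟩
          rw [Matrix.SpecialLinearGroup.coe_mul, hYc, hYtc, Finset.sum_insert hprs]
          have hsv : (∑ x ∈ s, μ x) ⬝ᵥ v = 0 := by
            have h2 : (∑ x ∈ s, μ x) ⬝ᵥ v = ∑ x ∈ s, (μ x ⬝ᵥ v) := by
              simp only [dotProduct, Finset.sum_apply, Finset.sum_mul]
              rw [Finset.sum_comm]
            rw [h2]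
            exact Finset.sum_eq_zero fun x _ => hμdot x
          calc (1 + vecMulVec v (∑ x ∈ s, μ x)) * (1 + vecMulVec v (μ pr))
              = 1 + (vecMulVec v (∑ x ∈ s, μ x) + vecMulVec v (μ pr))
                + vecMulVec v (∑ x ∈ s, μ x) * vecMulVec v (μ pr) := by noncomm_ring
            _ = 1 + vecMulVec v (μ pr + ∑ x ∈ s, μ x) := by
                rw [vmv_mul_vmv, hsv, zero_smul, add_zero, vmv_add_right,
                  add_comm (∑ x ∈ s, μ x) (μ pr)]
      -- the total sum equals c • w
      have hω : (∑ pr : Fin n × Fin n, μ pr) = c • w := by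
        funext x
        rw [Finset.sum_apply]
        have hterm2 : ∀ pr : Fin n × Fin n, μ pr x
            = (if x = pr.2 then c' * lam pr.1 * v pr.1 * w pr.2 else 0)
              - (if x = pr.1 then c' * lam pr.1 * w pr.2 * v pr.2 else 0) := by
          rintro ⟨p, r⟩
          simp only [hμ, Pi.smul_apply, Pi.sub_apply, Pi.single_apply, smul_eq_mul]
          split_ifs <;> ring
        calc ∑ pr : Fin n × Fin n, μ pr x
            = ∑ pr : Fin n × Fin n,
                ((if x = pr.2 then c' * lam pr.1 * v pr.1 * w pr.2 else 0)
                - (if x = pr.1 then c' * lam pr.1 * w pr.2 * v pr.2 else 0)) :=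
              Finset.sum_congr rfl fun pr _ => hterm2 pr
          _ = (∑ pr : Fin n × Fin n, if x = pr.2 then c' * lam pr.1 * v pr.1 * w pr.2 else 0)
              - ∑ pr : Fin n × Fin n, if x = pr.1 then c' * lam pr.1 * w pr.2 * v pr.2 else 0 :=
              Finset.sum_sub_distrib _ _
          _ = (∑ p, ∑ r, if x = r then c' * lam p * v p * w r else 0)
              - ∑ p, ∑ r, if x = p then c' * lam p * w r * v r else 0 := by
              rw [Fintype.sum_prod_type, Fintype.sum_prod_type]
          _ = (∑ p, c' * lam p * v p * w x) - ∑ r, c' * lam x * w r * v r := by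
              congr 1
              · refine Finset.sum_congr rfl fun p _ => ?_
                rw [Finset.sum_ite_eq Finset.univ x (fun r => c' * lam p * v p * w r)]
                simp
              · rw [Finset.sum_comm]
                refine (Finset.sum_congr rfl fun r _ => ?_).trans
                  (Finset.sum_congr rfl fun r _ => rfl)
                rw [Finset.sum_ite_eq Finset.univ x (fun p => c' * lam p * w r * v r)]
                simp
          _ = c' * (lam ⬝ᵥ v) * w x - c' * lam x * (w ⬝ᵥ v) := by
              congr 1
              · rw [dotProduct, Finset.mul_sum, Finset.sum_mul]
                exact Finset.sum_congr rfl fun p _ => by ring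
              · rw [dotProduct, Finset.mul_sum]
                exact Finset.sum_congr rfl fun r _ => by ring
          _ = (c • w) x := by
              rw [hlamv, hwv, hc]
              simp only [Pi.smul_apply, smul_eq_mul]
              ring
      obtain ⟨Y, hY, hYc⟩ := main Finset.univ
      refine ⟨Y, hY, ?_⟩
      have hYc2 : (Y : Matrix (Fin n) (Fin n) A) = 1 + c • vecMulVec v w := by
        rw [hYc, hω, vmv_smul_right]
      -- the final matrix identity
      set W : Matrix (Fin n) (Fin n) A := vecMulVec v w with hWdef
      have hW : W = (D * G) * Matrix.single i j 1 * (G' * adjugate D) := by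
        rw [hWdef, mul_std_mul]
      have hWD : W * D = D.det • ((D * G) * Matrix.single i j 1 * G') := by
        rw [hW]
        calc (D * G) * Matrix.single i j 1 * (G' * adjugate D) * D
            = (D * G) * Matrix.single i j 1 * G' * (adjugate D * D) := by noncomm_ring
          _ = (D * G) * Matrix.single i j 1 * G'
              * (D.det • (1 : Matrix (Fin n) (Fin n) A)) := by rw [Matrix.adjugate_mul]
          _ = D.det • ((D * G) * Matrix.single i j 1 * G') := by
              rw [Matrix.mul_smul, mul_one]
      have hac : a = c * D.det := by
        have h2e : (2 * e + 1 : ℕ) = e + e + 1 := by ring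
        rw [hb, h2e, pow_add, pow_add, pow_one, ht, hc, hc']
        ring
      have hstd : Matrix.single i j a = a • Matrix.single i j (1 : A) := by
        rw [Matrix.smul_single, smul_eq_mul, mul_one]
      have hL : D * ((g * f * g⁻¹ : Matrix.SpecialLinearGroup (Fin n) A)
            : Matrix (Fin n) (Fin n) A)
          = D + a • (D * G * Matrix.single i j 1 * G') := by
        rw [Matrix.SpecialLinearGroup.coe_mul, Matrix.SpecialLinearGroup.coe_mul, hfc,
          hstd]
        calc D * (G * (1 + a • Matrix.single i j (1:A)) * G')
            = D * (G * G') + a • (D * G * Matrix.single i j 1 * G') := by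
              rw [Matrix.mul_add G, mul_one, Matrix.add_mul, Matrix.mul_add,
                Matrix.mul_smul, Matrix.smul_mul, Matrix.mul_smul]
              simp only [Matrix.mul_assoc]
          _ = D + a • (D * G * Matrix.single i j 1 * G') := by
              rw [hGG', mul_one]
      rw [hL, hYc2, Matrix.add_mul, Matrix.one_mul, Matrix.smul_mul, hWD, smul_smul,
        ← hac]
end

section
/- (Lemma 5.7 of the paper) Let A be an integral domain with fraction field K, n ≥ 3, q ∈ A a nonzero element, a_2,…,a_n ∈ A, and let σ = q·I + Σ_{i=2}^n a_i·e_{1i} ∈ Mat_n(A); σ is invertible over K, with σ^{-1} = q^{-1}(I − Σ_{i=2}^n (a_i/q)·e_{1i}). Let 𝔭 ⊆ A be an ideal and let ℰ be a subgroup of SL_n(A) such that: (i) I + c·e_{ij} ∈ ℰ for every c ∈ A and all indices 2 ≤ i, j ≤ n with i ≠ j; and (ii) for every b ∈ 𝔭 and every 2 ≤ i ≤ n, the matrix σ·(I + b q²·e_{i1})·σ^{-1}, computed in Mat_n(K), has all entries in A and the resulting element of SL_n(A) belongs to ℰ. Then for all indices 2 ≤ k, l ≤ n with k ≠ l and every b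 ∈ 𝔭, the matrix I + a_l b q²·e_{k1} − a_k a_l b q·e_{kk} − a_l² b q·e_{kl} − a_k b q²·e_{l1} + a_k a_l b q·e_{ll} + a_k² b q·e_{lk} has determinant 1 and belongs to ℰ. -/
open Matrix Finset

local notation "E" => Matrix.single

section Lemma57Aux

variable {R : Type*} [CommRing R] {m : Type*} [Fintype m] [DecidableEq m]

omit [Fintype m] in
lemma lemma57_Eneg (i j : m) (c : R) : E i j (-c) = -(E i j c) := by
  ext p r
  simp only [Matrix.single, Matrix.of_apply, Matrix.neg_apply]
  split_ifs <;> simp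

lemma lemma57_EmulE_ne (i j k' l' : m) (h : j ≠ k') (c d : R) : E i j c * E k' l' d = 0 :=
  Matrix.single_mul_single_of_ne _ _ _ _ h _

lemma lemma57_EmulE_same (i j l' : m) (c d : R) : E i j c * E j l' d = E i l' (c * d) :=
  Matrix.single_mul_single_same _ _ _ _ _

lemma lemma57_star (q b : R) (a : m → R) (z k l : m) (hk : k ≠ z) (hl : l ≠ z) (hkl : k ≠ l) :
    (1 + ∑ j ∈ univ.filter (fun j => j ≠ z ∧ j ≠ k ∧ j ≠ l),
        (E k j (a l * a j * b * q) + E l j (-(a k * a j * b * q)))) *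
      ((q • (1 : Matrix m m R) + ∑ i ∈ univ.filter (fun i => i ≠ z), E z i (a i)) *
        (1 + (E k z (a l * b * q ^ 2) + E l z (-(a k * b) * q ^ 2)))) =
    (1 + E k z (a l * b * q ^ 2) - E k k (a k * a l * b * q) - E k l (a l ^ 2 * b * q)
       - E l z (a k * b * q ^ 2) + E l l (a k * a l * b * q) + E l k (a k ^ 2 * b * q)) *
      (q • (1 : Matrix m m R) + ∑ i ∈ univ.filter (fun i => i ≠ z), E z i (a i)) := by
  set F : Finset m := univ.filter (fun i => i ≠ z) with hF
  set F' : Finset m := univ.filter (fun j => j ≠ z ∧ j ≠ k ∧ j ≠ l) with hF'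
  set R0 : Matrix m m R := ∑ i ∈ F, E z i (a i) with hR0
  set S : Matrix m m R := ∑ j ∈ F', (E k j (a l * a j * b * q) + E l j (-(a k * a j * b * q))) with hS
  have hkF : k ∈ F := by simp [hF, hk]
  have hlF : l ∈ F := by simp [hF, hl]
  have h1 : R0 * E k z (a l * b * q ^ 2) = E z z (a k * (a l * b * q ^ 2)) := by
    rw [hR0, Finset.sum_mul, Finset.sum_eq_single_of_mem k hkF]
    · exact lemma57_EmulE_same _ _ _ _ _
    · exact fun i _ hi => lemma57_EmulE_ne _ _ _ _ hi _ _
  have h2 : R0 * E l z (-(a k * b) * q ^ 2) = E z z (a l * (-(a k * b) * q ^ 2)) := by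
    rw [hR0, Finset.sum_mul, Finset.sum_eq_single_of_mem l hlF]
    · exact lemma57_EmulE_same _ _ _ _ _
    · exact fun i _ hi => lemma57_EmulE_ne _ _ _ _ hi _ _
  have h12 : R0 * (E k z (a l * b * q ^ 2) + E l z (-(a k * b) * q ^ 2)) = 0 := by
    rw [mul_add, h1, h2, ← Matrix.single_add,
      show a k * (a l * b * q ^ 2) + a l * (-(a k * b) * q ^ 2) = 0 by ring,
      Matrix.single_zero]
  have hSD : S * (E k z (a l * b * q ^ 2) + E l z (-(a k * b) * q ^ 2)) = 0 := by
    rw [hS, Finset.sum_mul]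
    refine Finset.sum_eq_zero fun j hj => ?_
    rw [hF', Finset.mem_filter] at hj
    obtain ⟨-, hjz, hjk, hjl⟩ := hj
    rw [mul_add, add_mul, add_mul, lemma57_EmulE_ne _ _ _ _ hjk, lemma57_EmulE_ne _ _ _ _ hjk,
      lemma57_EmulE_ne _ _ _ _ hjl, lemma57_EmulE_ne _ _ _ _ hjl]
    simp
  have hSR : S * R0 = 0 := by
    rw [hS, Finset.sum_mul]
    refine Finset.sum_eq_zero fun j hj => ?_
    rw [hF', Finset.mem_filter] at hj
    obtain ⟨-, hjz, hjk, hjl⟩ := hj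
    rw [hR0, Finset.mul_sum]
    refine Finset.sum_eq_zero fun i _ => ?_
    rw [add_mul, lemma57_EmulE_ne _ _ _ _ hjz, lemma57_EmulE_ne _ _ _ _ hjz, add_zero]
  set W : Matrix m m R := E k z (a l * b * q ^ 2) - E k k (a k * a l * b * q)
      - E k l (a l ^ 2 * b * q) - E l z (a k * b * q ^ 2) + E l l (a k * a l * b * q)
      + E l k (a k ^ 2 * b * q) with hW
  have hWR : W * R0
      = ∑ i ∈ F, (E k i (a l * b * q ^ 2 * a i) + E l i (-(a k * b * q ^ 2 * a i))) := by
    rw [hR0, Finset.mul_sum]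
    refine Finset.sum_congr rfl fun i _ => ?_
    rw [hW, add_mul, add_mul, sub_mul, sub_mul, sub_mul,
      lemma57_EmulE_same, lemma57_EmulE_same,
      lemma57_EmulE_ne _ _ _ _ hk, lemma57_EmulE_ne _ _ _ _ hl, lemma57_EmulE_ne _ _ _ _ hl,
      lemma57_EmulE_ne _ _ _ _ hk, lemma57_Eneg]
    abel
  have lhs_eq : (1 + S) * ((q • (1 : Matrix m m R) + R0) *
        (1 + (E k z (a l * b * q ^ 2) + E l z (-(a k * b) * q ^ 2))))
      = (q • (1 : Matrix m m R) + R0)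
        + (q • (E k z (a l * b * q ^ 2) + E l z (-(a k * b) * q ^ 2)) + q • S) := by
    rw [mul_add (q • (1 : Matrix m m R) + R0), mul_one, add_mul (q • (1 : Matrix m m R)) R0,
      smul_mul_assoc, one_mul, h12, add_zero]
    rw [add_mul, one_mul, mul_add, mul_add, mul_smul_comm q S, mul_smul_comm q S,
      mul_one, hSR, hSD, smul_zero]
    abel
  have rhs_eq : (1 + W) * (q • (1 : Matrix m m R) + R0)
      = (q • (1 : Matrix m m R) + R0)
        + (q • W + ∑ i ∈ F, (E k i (a l * b * q ^ 2 * a i) + E l i (-(a k * b * q ^ 2 * a i)))) := by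
    rw [add_mul, one_mul, mul_add, mul_smul_comm, mul_one, hWR]
  have hTfac : (1 + E k z (a l * b * q ^ 2) - E k k (a k * a l * b * q) - E k l (a l ^ 2 * b * q)
       - E l z (a k * b * q ^ 2) + E l l (a k * a l * b * q) + E l k (a k ^ 2 * b * q))
      = 1 + W := by rw [hW]; abel
  rw [hTfac, rhs_eq, lhs_eq]
  congr 1
  have hFsplit : F = insert k (insert l F') := by
    ext j
    simp only [hF, hF', Finset.mem_insert, Finset.mem_filter, Finset.mem_univ, true_and]
    by_cases h1 : j = k
    · subst h1; simp [hk]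
    · by_cases h2 : j = l
      · subst h2; simp [hl]
      · simp [h1, h2]
  have hknotin : k ∉ insert l F' := by simp [hF', Finset.mem_insert, hkl]
  have hlnotin : l ∉ F' := by simp [hF']
  rw [hFsplit, Finset.sum_insert hknotin, Finset.sum_insert hlnotin]
  have hSsum : q • S
      = ∑ j ∈ F', (E k j (a l * b * q ^ 2 * a j) + E l j (-(a k * b * q ^ 2 * a j))) := by
    rw [hS, Finset.smul_sum]
    refine Finset.sum_congr rfl fun j _ => ?_
    rw [smul_add, Matrix.smul_single, Matrix.smul_single, smul_eq_mul, smul_eq_mul,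
      show q * (a l * a j * b * q) = a l * b * q ^ 2 * a j by ring,
      show q * -(a k * a j * b * q) = -(a k * b * q ^ 2 * a j) by ring]
  rw [hSsum]
  have hfin : q • (E k z (a l * b * q ^ 2) + E l z (-(a k * b) * q ^ 2))
      = q • W + ((E k k (a l * b * q ^ 2 * a k) + E l k (-(a k * b * q ^ 2 * a k)))
        + (E k l (a l * b * q ^ 2 * a l) + E l l (-(a k * b * q ^ 2 * a l)))) := by
    rw [hW]
    simp only [smul_add, smul_sub, Matrix.smul_single, smul_eq_mul, lemma57_Eneg]
    rw [show q * (-(a k * b) * q ^ 2) = -(q * (a k * b * q ^ 2)) by ring, lemma57_Eneg,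
      show a l * b * q ^ 2 * a k = q * (a k * a l * b * q) by ring,
      show a k * b * q ^ 2 * a k = q * (a k ^ 2 * b * q) by ring,
      show a l * b * q ^ 2 * a l = q * (a l ^ 2 * b * q) by ring,
      show a k * b * q ^ 2 * a l = q * (a k * a l * b * q) by ring]
    abel
  rw [hfin]
  abel

lemma lemma57_det {N : ℕ} [NeZero N] (q : R) (a : Fin N → R) :
    (q • (1 : Matrix (Fin N) (Fin N) R)
      + ∑ i ∈ univ.filter (fun i : Fin N => i ≠ 0), E 0 i (a i)).det = q ^ N := by
  set M : Matrix (Fin N) (Fin N) R :=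
    q • (1 : Matrix (Fin N) (Fin N) R)
      + ∑ i ∈ univ.filter (fun i : Fin N => i ≠ 0), E 0 i (a i) with hM
  have hbt : M.BlockTriangular id := by
    intro i j hij
    have hij' : (j : Fin N) < i := hij
    have hi0 : i ≠ 0 := by
      rintro rfl
      rw [Fin.lt_def] at hij'
      simp at hij'
    rw [hM, Matrix.add_apply, Matrix.smul_apply, Matrix.one_apply_ne (ne_of_gt hij'),
      smul_zero, Matrix.sum_apply, Finset.sum_eq_zero, add_zero]
    intro x hx
    simp only [Matrix.single, Matrix.of_apply]
    rw [if_neg]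
    rintro ⟨h1, -⟩
    exact hi0 h1.symm
  rw [Matrix.det_of_upperTriangular hbt]
  have hdiag : ∀ i : Fin N, M i i = q := by
    intro i
    rw [hM, Matrix.add_apply, Matrix.smul_apply, Matrix.one_apply_eq, smul_eq_mul, mul_one,
      Matrix.sum_apply, Finset.sum_eq_zero, add_zero]
    intro x hx
    rw [Finset.mem_filter] at hx
    simp only [Matrix.single, Matrix.of_apply]
    rw [if_neg]
    rintro ⟨h1, h2⟩
    exact hx.2 (h2.trans h1.symm)
  calc ∏ i : Fin N, M i i = ∏ _i : Fin N, q := Finset.prod_congr rfl fun i _ => hdiag i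
  _ = q ^ N := by simp

end Lemma57Aux

/-- **Lemma 5.7 of the paper.** Let `A` be an integral domain with fraction field
`K`, `n ≥ 3` (here the matrix size is `n + 3` with `n : ℕ` arbitrary), `q ∈ A`
nonzero, `a_2, …, a_n ∈ A`, and `σ = q·I + Σ_{i≠1} a_i·e_{1i}` (the paper's
index `1` is `0 : Fin (n+3)`).  Let `𝔭 ⊆ A` be an ideal and `ℰ ≤ SL_n(A)` a
subgroup containing (i) all elementary matrices `I + c·e_{ij}` with
`i, j ≠ 0`, `i ≠ j`, and (ii) for every `b ∈ 𝔭` and `i ≠ 0` an element whose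
image in `Mat_n(K)` equals `σ·(I + b q²·e_{i0})·σ⁻¹`.  Then for all `k ≠ l`
(both `≠ 0`) and `b ∈ 𝔭` the matrix
`I + a_l b q²·e_{k0} − a_k a_l b q·e_{kk} − a_l² b q·e_{kl} − a_k b q²·e_{l0}
 + a_k a_l b q·e_{ll} + a_k² b q·e_{lk}` has determinant `1` and lies in `ℰ`. -/
theorem lemma_5_7 (A : Type*) [CommRing A] [IsDomain A] (n : ℕ)
    (q : A) (hq : q ≠ 0) (a : Fin (n + 3) → A) (𝔭 : Ideal A)
    (ℰ : Subgroup (Matrix.SpecialLinearGroup (Fin (n + 3)) A))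
    (σ : Matrix (Fin (n + 3)) (Fin (n + 3)) A)
    (hσ : σ = q • (1 : Matrix (Fin (n + 3)) (Fin (n + 3)) A)
        + ∑ i ∈ Finset.univ.filter (fun i : Fin (n + 3) => i ≠ 0),
            Matrix.single 0 i (a i))
    (hi : ∀ (c : A) (i j : Fin (n + 3)), i ≠ 0 → j ≠ 0 → i ≠ j →
      ∀ τ : Matrix.SpecialLinearGroup (Fin (n + 3)) A,
        (τ : Matrix (Fin (n + 3)) (Fin (n + 3)) A) =
          1 + Matrix.single i j c → τ ∈ ℰ)
    (hii : ∀ b ∈ 𝔭, ∀ i : Fin (n + 3), i ≠ 0 →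
      ∃ τ : Matrix.SpecialLinearGroup (Fin (n + 3)) A, τ ∈ ℰ ∧
        (algebraMap A (FractionRing A)).mapMatrix
            (τ : Matrix (Fin (n + 3)) (Fin (n + 3)) A) =
          (algebraMap A (FractionRing A)).mapMatrix σ *
            (algebraMap A (FractionRing A)).mapMatrix
              (1 + Matrix.single i 0 (b * q ^ 2)) *
            ((algebraMap A (FractionRing A)).mapMatrix σ)⁻¹) :
    ∀ (k l : Fin (n + 3)), k ≠ 0 → l ≠ 0 → k ≠ l → ∀ b ∈ 𝔭,
      ((1 + Matrix.single k 0 (a l * b * q ^ 2)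
          - Matrix.single k k (a k * a l * b * q)
          - Matrix.single k l (a l ^ 2 * b * q)
          - Matrix.single l 0 (a k * b * q ^ 2)
          + Matrix.single l l (a k * a l * b * q)
          + Matrix.single l k (a k ^ 2 * b * q) :
            Matrix (Fin (n + 3)) (Fin (n + 3)) A).det = 1) ∧
      ∀ τ : Matrix.SpecialLinearGroup (Fin (n + 3)) A,
        (τ : Matrix (Fin (n + 3)) (Fin (n + 3)) A) =
          1 + Matrix.single k 0 (a l * b * q ^ 2)
            - Matrix.single k k (a k * a l * b * q)
            - Matrix.single k l (a l ^ 2 * b * q)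
            - Matrix.single l 0 (a k * b * q ^ 2)
            + Matrix.single l l (a k * a l * b * q)
            + Matrix.single l k (a k ^ 2 * b * q) → τ ∈ ℰ := by
  intro k l hk hl hkl b hb
  classical
  have hf : Function.Injective (algebraMap A (FractionRing A)) :=
    IsFractionRing.injective A (FractionRing A)
  have hmapinj : Function.Injective
      ((algebraMap A (FractionRing A)).mapMatrix :
        Matrix (Fin (n + 3)) (Fin (n + 3)) A → _) := by
    intro M N h
    ext i j
    apply hf
    have := congrArg (fun X : Matrix (Fin (n + 3)) (Fin (n + 3)) (FractionRing A) => X i j) h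
    simpa [RingHom.mapMatrix_apply, Matrix.map_apply] using this
  have hdetσ : σ.det = q ^ (n + 3) := by rw [hσ]; exact lemma57_det q a
  have hu : IsUnit ((algebraMap A (FractionRing A)).mapMatrix σ).det := by
    rw [← RingHom.map_det, hdetσ, map_pow]
    refine (isUnit_iff_ne_zero.mpr fun h => hq (hf ?_)).pow _
    rw [h, map_zero]
  have hinv1 : ((algebraMap A (FractionRing A)).mapMatrix σ)⁻¹ *
      (algebraMap A (FractionRing A)).mapMatrix σ = 1 := Matrix.nonsing_inv_mul _ hu
  have hinv2 : (algebraMap A (FractionRing A)).mapMatrix σ *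
      ((algebraMap A (FractionRing A)).mapMatrix σ)⁻¹ = 1 := Matrix.mul_nonsing_inv _ hu
  obtain ⟨X, hXE, hXmap⟩ := hii (a l * b) (Ideal.mul_mem_left 𝔭 (a l) hb) k hk
  obtain ⟨Y, hYE, hYmap⟩ := hii (-(a k * b)) (𝔭.neg_mem (Ideal.mul_mem_left 𝔭 (a k) hb)) l hl
  have hCex : ∀ G : Finset (Fin (n + 3)), (∀ j ∈ G, j ≠ 0 ∧ j ≠ k ∧ j ≠ l) →
      ∃ g : Matrix.SpecialLinearGroup (Fin (n + 3)) A, g ∈ ℰ ∧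
        (g : Matrix (Fin (n + 3)) (Fin (n + 3)) A)
          = 1 + ∑ j ∈ G, (E k j (a l * a j * b * q) + E l j (-(a k * a j * b * q))) := by
    intro G
    induction G using Finset.induction_on with
    | empty => exact fun _ => ⟨1, one_mem ℰ, by simp⟩
    | @insert j G hjG ih =>
      intro hmem
      obtain ⟨hj0, hjk, hjl⟩ := hmem j (Finset.mem_insert_self j G)
      obtain ⟨g, hgE, hgmat⟩ := ih fun x hx => hmem x (Finset.mem_insert_of_mem hx)
      have hdet1 : (1 + E k j (a l * a j * b * q) :
          Matrix (Fin (n + 3)) (Fin (n + 3)) A).det = 1 := by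
        have := Matrix.det_transvection_of_ne k j (Ne.symm hjk) (a l * a j * b * q)
        rwa [Matrix.transvection] at this
      have hdet2 : (1 + E l j (-(a k * a j * b * q)) :
          Matrix (Fin (n + 3)) (Fin (n + 3)) A).det = 1 := by
        have := Matrix.det_transvection_of_ne l j (Ne.symm hjl) (-(a k * a j * b * q))
        rwa [Matrix.transvection] at this
      refine ⟨(show Matrix.SpecialLinearGroup (Fin (n + 3)) A from ⟨_, hdet1⟩) *
          (show Matrix.SpecialLinearGroup (Fin (n + 3)) A from ⟨_, hdet2⟩) * g,
        mul_mem (mul_mem (hi _ k j hk hj0 (Ne.symm hjk) _ rfl)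
          (hi _ l j hl hj0 (Ne.symm hjl) _ rfl)) hgE, ?_⟩
      rw [Matrix.SpecialLinearGroup.coe_mul, Matrix.SpecialLinearGroup.coe_mul, hgmat,
        Finset.sum_insert hjG]
      show (1 + E k j (a l * a j * b * q)) * (1 + E l j (-(a k * a j * b * q))) * _ = _
      have e1 : ((1 + E k j (a l * a j * b * q)) * (1 + E l j (-(a k * a j * b * q))) :
          Matrix (Fin (n + 3)) (Fin (n + 3)) A)
          = 1 + (E k j (a l * a j * b * q) + E l j (-(a k * a j * b * q))) := by
        rw [mul_add, mul_one, add_mul, one_mul, lemma57_EmulE_ne _ _ _ _ hjl, add_zero]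
        abel
      rw [e1]
      have e2 : ((E k j (a l * a j * b * q) + E l j (-(a k * a j * b * q))) *
          (∑ x ∈ G, (E k x (a l * a x * b * q) + E l x (-(a k * a x * b * q)))) :
          Matrix (Fin (n + 3)) (Fin (n + 3)) A) = 0 := by
        rw [Finset.mul_sum]
        refine Finset.sum_eq_zero fun x hx => ?_
        rw [mul_add, add_mul, add_mul, lemma57_EmulE_ne _ _ _ _ hjk,
          lemma57_EmulE_ne _ _ _ _ hjk, lemma57_EmulE_ne _ _ _ _ hjl,
          lemma57_EmulE_ne _ _ _ _ hjl]
        simp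
      rw [mul_add, mul_one, add_mul, one_mul, e2, add_zero]
      abel
  obtain ⟨C, hCE, hCmat⟩ := hCex (univ.filter (fun j => j ≠ 0 ∧ j ≠ k ∧ j ≠ l))
    (fun j hj => (Finset.mem_filter.mp hj).2)
  have hD : ((1 + E k 0 (a l * b * q ^ 2)) * (1 + E l 0 (-(a k * b) * q ^ 2)) :
      Matrix (Fin (n + 3)) (Fin (n + 3)) A)
      = 1 + (E k 0 (a l * b * q ^ 2) + E l 0 (-(a k * b) * q ^ 2)) := by
    rw [mul_add, mul_one, add_mul, one_mul, lemma57_EmulE_ne _ _ _ _ (Ne.symm hl), add_zero]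
    abel
  have hstar' : (1 + ∑ j ∈ univ.filter (fun j => j ≠ 0 ∧ j ≠ k ∧ j ≠ l),
        (E k j (a l * a j * b * q) + E l j (-(a k * a j * b * q)))) *
      (σ * (1 + (E k 0 (a l * b * q ^ 2) + E l 0 (-(a k * b) * q ^ 2)))) =
      (1 + E k 0 (a l * b * q ^ 2) - E k k (a k * a l * b * q) - E k l (a l ^ 2 * b * q)
        - E l 0 (a k * b * q ^ 2) + E l l (a k * a l * b * q) + E l k (a k ^ 2 * b * q)) * σ := by
    rw [hσ]
    exact lemma57_star q b a 0 k l hk hl hkl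
  have hGmat : ((C * X * Y : Matrix.SpecialLinearGroup (Fin (n + 3)) A) :
      Matrix (Fin (n + 3)) (Fin (n + 3)) A)
      = 1 + Matrix.single k 0 (a l * b * q ^ 2)
        - Matrix.single k k (a k * a l * b * q)
        - Matrix.single k l (a l ^ 2 * b * q)
        - Matrix.single l 0 (a k * b * q ^ 2)
        + Matrix.single l l (a k * a l * b * q)
        + Matrix.single l k (a k ^ 2 * b * q) := by
    have hkey : (algebraMap A (FractionRing A)).mapMatrix
        (1 + ∑ j ∈ univ.filter (fun j => j ≠ 0 ∧ j ≠ k ∧ j ≠ l),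
          (E k j (a l * a j * b * q) + E l j (-(a k * a j * b * q)))) *
        ((algebraMap A (FractionRing A)).mapMatrix σ *
          (algebraMap A (FractionRing A)).mapMatrix
            (1 + (E k 0 (a l * b * q ^ 2) + E l 0 (-(a k * b) * q ^ 2)))) =
        (algebraMap A (FractionRing A)).mapMatrix
          (1 + E k 0 (a l * b * q ^ 2) - E k k (a k * a l * b * q) - E k l (a l ^ 2 * b * q)
            - E l 0 (a k * b * q ^ 2) + E l l (a k * a l * b * q) + E l k (a k ^ 2 * b * q)) *
        (algebraMap A (FractionRing A)).mapMatrix σ := by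
      rw [← _root_.map_mul, ← _root_.map_mul, ← _root_.map_mul, hstar']
    apply hmapinj
    rw [Matrix.SpecialLinearGroup.coe_mul, Matrix.SpecialLinearGroup.coe_mul,
      _root_.map_mul, _root_.map_mul, hXmap, hYmap, hCmat]
    simp only [Matrix.mul_assoc]
    rw [← Matrix.mul_assoc (((algebraMap A (FractionRing A)).mapMatrix σ)⁻¹)
        ((algebraMap A (FractionRing A)).mapMatrix σ), hinv1, one_mul]
    rw [← Matrix.mul_assoc ((algebraMap A (FractionRing A)).mapMatrix
        (1 + Matrix.single k 0 (a l * b * q ^ 2)))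
        ((algebraMap A (FractionRing A)).mapMatrix
        (1 + Matrix.single l 0 (-(a k * b) * q ^ 2)))]
    rw [← _root_.map_mul, hD]
    rw [← Matrix.mul_assoc ((algebraMap A (FractionRing A)).mapMatrix σ)]
    rw [← Matrix.mul_assoc, hkey, Matrix.mul_assoc, hinv2, mul_one]
  refine ⟨?_, ?_⟩
  · have := (C * X * Y).prop
    rwa [hGmat] at this
  · intro τ hτ
    have hτ' : τ = C * X * Y := Subtype.ext (hτ.trans hGmat.symm)
    rw [hτ']
    exact mul_mem (mul_mem hCE hXE) hYE
end

section
/- (Proposition 5.8 of the paper) Let A be an integral domain with fraction field K, n ≥ 3, q ∈ A a nonzero element, a_2,…,a_n ∈ A, and let σ = q·I + Σ_{i=2}^n a_i·e_{1i} ∈ Mat_n(A). Let 𝔭 ⊆ A be an ideal and let ℰ be a subgroup of SL_n(A) such that: (i) I + c·e_{ij} ∈ ℰ for every c ∈ A and all indices 2 ≤ i, j ≤ n with i ≠ j; and (ii) for every b ∈ 𝔭 and every 2 ≤ i ≤ n, the matrix σ·(I + b q²·e_{i1})·σ^{-1}, computed in Mat_n(K), has all entries in A and the resulting element of SL_n(A)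 belongs to ℰ. Assume in addition that SL_{n−1}(A) = E_{n−1}(A). Then for all indices 2 ≤ k, l ≤ n with k ≠ l and every b ∈ 𝔭, the matrix I + a_l b q²·e_{k1} − a_k b q²·e_{l1} belongs to ℰ. -/
theorem stdB_neg {A : Type*} [CommRing A] {m : Type*} [DecidableEq m]
    (i j : m) (c : A) :
    Matrix.single i j (-c) = -(Matrix.single i j c) := by
  have := Matrix.smul_single (-1 : A) i j c
  rw [neg_one_smul, smul_eq_mul, neg_one_mul] at this
  exact this.symm

theorem blockMem {A : Type*} [CommRing A] {n : ℕ}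
    (ℰ : Subgroup (Matrix.SpecialLinearGroup (Fin (n + 3)) A))
    (hi : ∀ (c : A) (i j : Fin (n + 3)), i ≠ 0 → j ≠ 0 → i ≠ j →
      ∀ τ : Matrix.SpecialLinearGroup (Fin (n + 3)) A,
        (τ : Matrix (Fin (n + 3)) (Fin (n + 3)) A) =
          1 + Matrix.single i j c → τ ∈ ℰ)
    (hSLE : En (n + 2) A = ⊤)
    (D : Matrix (Fin (n + 3)) (Fin (n + 3)) A)
    (hdet : D.det = 1)
    (h00 : D 0 0 = 1)
    (hrow : ∀ j : Fin (n + 3), j ≠ 0 → D 0 j = 0)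
    (hcol : ∀ i : Fin (n + 3), i ≠ 0 → D i 0 = 0) :
    ∃ μ : Matrix.SpecialLinearGroup (Fin (n + 3)) A, μ ∈ ℰ ∧
      (μ : Matrix (Fin (n + 3)) (Fin (n + 3)) A) = D := by
  classical
  set e : Fin (n + 3) ≃ (Fin (n + 2) ⊕ Unit) :=
    (finSuccEquiv (n + 2)).trans (Equiv.optionEquivSumPUnit _) with he
  have he0 : e 0 = Sum.inr Unit.unit := by
    simp [he, finSuccEquiv_zero]
  have heS : ∀ i : Fin (n + 2), e i.succ = Sum.inl i := by
    intro i; simp [he, finSuccEquiv_succ]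
  set B : Matrix (Fin (n + 2)) (Fin (n + 2)) A :=
    D.submatrix Fin.succ Fin.succ with hB
  have hDe : D = (Matrix.fromBlocks B 0 0 (1 : Matrix Unit Unit A)).submatrix e e := by
    ext p r
    induction p using Fin.cases with
    | zero =>
      induction r using Fin.cases with
      | zero => simp [Matrix.submatrix_apply, he0, h00, Matrix.one_apply]
      | succ r' =>
        simp [Matrix.submatrix_apply, he0, heS, hrow r'.succ (Fin.succ_ne_zero r')]
    | succ p' =>
      induction r using Fin.cases with
      | zero =>
        simp [Matrix.submatrix_apply, he0, heS, hcol p'.succ (Fin.succ_ne_zero p')]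
      | succ r' =>
        simp [Matrix.submatrix_apply, heS, hB]
  have hdetB : B.det = 1 := by
    have h := hdet
    rw [hDe, Matrix.det_submatrix_equiv_self, Matrix.det_fromBlocks_zero₂₁] at h
    simpa using h
  -- the block embedding homomorphism
  have hdetblock : ∀ g : Matrix.SpecialLinearGroup (Fin (n + 2)) A,
      ((Matrix.fromBlocks (g : Matrix (Fin (n+2)) (Fin (n+2)) A) 0 0
        (1 : Matrix Unit Unit A)).submatrix e e).det = 1 := by
    intro g
    rw [Matrix.det_submatrix_equiv_self, Matrix.det_fromBlocks_zero₂₁, g.prop]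
    simp
  let ι : Matrix.SpecialLinearGroup (Fin (n + 2)) A →*
      Matrix.SpecialLinearGroup (Fin (n + 3)) A :=
    { toFun := fun g => ⟨_, hdetblock g⟩
      map_one' := by
        apply Subtype.ext
        simp only [Matrix.SpecialLinearGroup.coe_one]
        rw [Matrix.fromBlocks_one, Matrix.submatrix_one_equiv]
      map_mul' := fun g h => by
        apply Subtype.ext
        simp only [Matrix.SpecialLinearGroup.coe_mul]
        show _ = (Matrix.fromBlocks (g : Matrix (Fin (n+2)) (Fin (n+2)) A) 0 0
          (1 : Matrix Unit Unit A)).submatrix e e * (Matrix.fromBlocks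
          (h : Matrix (Fin (n+2)) (Fin (n+2)) A) 0 0 (1 : Matrix Unit Unit A)).submatrix e e
        rw [Matrix.submatrix_mul_equiv, Matrix.fromBlocks_multiply]
        simp }
  have hmem : ∀ g : Matrix.SpecialLinearGroup (Fin (n + 2)) A, ι g ∈ ℰ := by
    intro g
    have hg : g ∈ Subgroup.closure (elemSet (n + 2) A Set.univ) := by
      have : g ∈ En (n + 2) A := by rw [hSLE]; exact Subgroup.mem_top g
      exact this
    refine Subgroup.closure_induction (p := fun x _ => ι x ∈ ℰ) ?_ ?_ ?_ ?_ hg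
    · rintro x ⟨i, j, hij, c, -, hx⟩
      refine hi c i.succ j.succ (Fin.succ_ne_zero i) (Fin.succ_ne_zero j)
        (fun h => hij (Fin.succ_injective _ h)) (ι x) ?_
      show (Matrix.fromBlocks (x : Matrix (Fin (n+2)) (Fin (n+2)) A) 0 0
        (1 : Matrix Unit Unit A)).submatrix e e = _
      rw [hx]
      ext p r
      induction p using Fin.cases with
      | zero =>
        induction r using Fin.cases with
        | zero =>
          simp [Matrix.submatrix_apply, he0, Matrix.one_apply,
            Matrix.single, Fin.succ_ne_zero]
        | succ r' =>
          simp [Matrix.submatrix_apply, he0, heS, Matrix.one_apply,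
            Matrix.single, Fin.succ_ne_zero, (Fin.succ_ne_zero r').symm]
      | succ p' =>
        induction r using Fin.cases with
        | zero =>
          simp [Matrix.submatrix_apply, he0, heS, Matrix.one_apply,
            Matrix.single, Fin.succ_ne_zero, Fin.succ_ne_zero p']
        | succ r' =>
          simp [Matrix.submatrix_apply, heS, Matrix.one_apply,
            Matrix.single, Fin.succ_inj]
    · show ι 1 ∈ ℰ
      rw [map_one]; exact one_mem ℰ
    · intro x y _ _ hx hy
      show ι (x * y) ∈ ℰ
      rw [map_mul]; exact mul_mem hx hy
    · intro x _ hx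
      show ι x⁻¹ ∈ ℰ
      rw [map_inv]; exact inv_mem hx
  refine ⟨ι ⟨B, hdetB⟩, hmem _, ?_⟩
  show (Matrix.fromBlocks B 0 0 (1 : Matrix Unit Unit A)).submatrix e e = D
  exact hDe.symm

section AbstractAlgebra

variable {R : Type*} [CommRing R] {m : Type*} [Fintype m] [DecidableEq m]

theorem mul_sub_zero' (U V W : Matrix m m R) (h1 : U * V = 0) (h2 : U * W = 0) :
    U * (V - W) = 0 := by
  rw [mul_sub, h1, h2, sub_zero]

theorem mul_sub_cancel' (U V W E : Matrix m m R) (h1 : U * V = E) (h2 : U * W = E) :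
    U * (V - W) = 0 := by
  rw [mul_sub, h1, h2, sub_self]

theorem sub_smul_mul' (q : R) (KX LY Kx Ly N : Matrix m m R)
    (h1 : KX = q • Kx) (h2 : LY = q • Ly) :
    KX * N - LY * N = q • ((Kx - Ly) * N) := by
  rw [h1, h2, smul_mul_assoc, smul_mul_assoc, ← smul_sub, ← sub_mul]

theorem mul_smul_eq' (q : R) (N U V E : Matrix m m R)
    (h1 : N * U = E) (h2 : N * V = E) (KX LY : Matrix m m R)
    (hKX : KX = q • U) (hLY : LY = q • V) :
    N * KX = N * LY := by
  rw [hKX, hLY, mul_smul_comm, mul_smul_comm, h1, h2]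

theorem alg_inv' (q : R) (N : Matrix m m R) (h4 : N * N = 0) :
    (q • (1 : Matrix m m R) + N) * (q • (1 : Matrix m m R) - N) =
      (q * q) • (1 : Matrix m m R) := by
  simp only [mul_sub, add_mul, smul_mul_assoc, mul_smul_comm, one_mul, mul_one,
    h4, smul_smul, smul_zero, sub_zero, smul_add]
  abel

theorem alg_main' (q : R) (N W KX LY : Matrix m m R)
    (hP : KX * N - LY * N = q • (W * N))
    (h2 : N * KX = N * LY)
    (h3 : N * W = 0)
    (h4 : N * N = 0)
    (h5 : KX * LY = 0)
    (h6 : KX * W = 0)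
    (h7 : LY * W = 0) :
    ((1 + KX - LY - W * N) * (q • (1 : Matrix m m R) + N) =
      (q • (1 : Matrix m m R) + N) * ((1 + KX) * (1 - LY))) ∧
    ((1 + KX - LY - W * N) * (1 + W * N) = 1 + KX - LY) ∧
    ((1 + KX) * (1 - LY) = 1 + KX - LY) := by
  have hWNN : W * N * N = 0 := by rw [mul_assoc, h4, mul_zero]
  have e2 : (1 + KX) * (1 - LY) = 1 + KX - LY := by
    simp only [mul_sub, mul_one, add_mul, one_mul, h5]
    abel
  refine ⟨?_, ?_, e2⟩
  · have e1 : (1 + KX - LY - W * N) * (q • (1 : Matrix m m R) + N)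
        = q • (1 : Matrix m m R) + q • KX - q • LY - q • (W * N)
          + (N + (KX * N - LY * N) - W * N * N) := by
      simp only [mul_add, add_mul, sub_mul, mul_smul_comm, mul_one, one_mul,
        smul_add, smul_sub]
      abel
    have e3 : (q • (1 : Matrix m m R) + N) * (1 + KX - LY)
        = q • (1 : Matrix m m R) + q • KX - q • LY + (N + N * KX - N * LY) := by
      simp only [mul_add, add_mul, mul_sub, sub_mul, one_mul, mul_one,
        smul_mul_assoc, smul_add, smul_sub]
      abel
    rw [e1, hWNN, hP, e2, e3, h2]
    abel
  · have k1 : KX * (W * N) = 0 := by rw [← mul_assoc, h6, zero_mul]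
    have k2 : LY * (W * N) = 0 := by rw [← mul_assoc, h7, zero_mul]
    have k3 : W * N * (W * N) = 0 := by
      rw [mul_assoc, ← mul_assoc N W N, h3, zero_mul, mul_zero]
    simp only [mul_add, add_mul, sub_mul, one_mul, mul_one, k1, k2, k3,
      add_zero, sub_zero]
    abel

end AbstractAlgebra

set_option maxHeartbeats 1000000 in
/-- **Proposition 5.8 of the paper.** In the setting of Lemma 5.7 (matrix size
`n + 3`, i.e. `n ≥ 3`; `σ = q·I + Σ_{i≠1} a_i·e_{1i}`, the paper's index `1`
being `0 : Fin (n+3)`; `ℰ ≤ SL_n(A)` satisfying conditions (i) and (ii)),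
assume additionally that `SL_{n−1}(A) = E_{n−1}(A)`.  Then for all `k ≠ l`
(both `≠ 0`) and every `b ∈ 𝔭` the matrix
`I + a_l b q²·e_{k0} − a_k b q²·e_{l0}` belongs to `ℰ`. -/
theorem prop_5_8 (A : Type*) [CommRing A] [IsDomain A] (n : ℕ)
    (q : A) (hq : q ≠ 0) (a : Fin (n + 3) → A) (𝔭 : Ideal A)
    (ℰ : Subgroup (Matrix.SpecialLinearGroup (Fin (n + 3)) A))
    (σ : Matrix (Fin (n + 3)) (Fin (n + 3)) A)
    (hσ : σ = q • (1 : Matrix (Fin (n + 3)) (Fin (n + 3)) A)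
        + ∑ i ∈ Finset.univ.filter (fun i : Fin (n + 3) => i ≠ 0),
            Matrix.single 0 i (a i))
    (hi : ∀ (c : A) (i j : Fin (n + 3)), i ≠ 0 → j ≠ 0 → i ≠ j →
      ∀ τ : Matrix.SpecialLinearGroup (Fin (n + 3)) A,
        (τ : Matrix (Fin (n + 3)) (Fin (n + 3)) A) =
          1 + Matrix.single i j c → τ ∈ ℰ)
    (hii : ∀ b ∈ 𝔭, ∀ i : Fin (n + 3), i ≠ 0 →
      ∃ τ : Matrix.SpecialLinearGroup (Fin (n + 3)) A, τ ∈ ℰ ∧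
        (algebraMap A (FractionRing A)).mapMatrix
            (τ : Matrix (Fin (n + 3)) (Fin (n + 3)) A) =
          (algebraMap A (FractionRing A)).mapMatrix σ *
            (algebraMap A (FractionRing A)).mapMatrix
              (1 + Matrix.single i 0 (b * q ^ 2)) *
            ((algebraMap A (FractionRing A)).mapMatrix σ)⁻¹)
    (hSLE : En (n + 2) A = ⊤) :
    ∀ (k l : Fin (n + 3)), k ≠ 0 → l ≠ 0 → k ≠ l → ∀ b ∈ 𝔭,
      ((1 + Matrix.single k 0 (a l * b * q ^ 2)
          - Matrix.single l 0 (a k * b * q ^ 2) :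
            Matrix (Fin (n + 3)) (Fin (n + 3)) A).det = 1) ∧
      ∀ τ : Matrix.SpecialLinearGroup (Fin (n + 3)) A,
        (τ : Matrix (Fin (n + 3)) (Fin (n + 3)) A) =
          1 + Matrix.single k 0 (a l * b * q ^ 2)
            - Matrix.single l 0 (a k * b * q ^ 2) → τ ∈ ℰ := by
  intro k l hk hl hkl b hb
  set f : A →+* FractionRing A := (algebraMap A (FractionRing A) : A →+* FractionRing A)
    with hf
  set N : Matrix (Fin (n + 3)) (Fin (n + 3)) A :=
    ∑ i ∈ Finset.univ.filter (fun i : Fin (n + 3) => i ≠ 0),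
      Matrix.single 0 i (a i) with hN
  have hσN : σ = q • (1 : Matrix (Fin (n + 3)) (Fin (n + 3)) A) + N := hσ
  -- leaf facts
  have hNmul : ∀ (i : Fin (n + 3)) (c : A), i ≠ 0 →
      N * Matrix.single i 0 c =
        (Matrix.single 0 0 (a i * c) :
          Matrix (Fin (n + 3)) (Fin (n + 3)) A) := by
    intro i c hi0
    rw [hN, Matrix.sum_mul, Finset.sum_eq_single i]
    · exact Matrix.single_mul_single_same (a i) 0 i 0 c
    · intro j _ hji
      exact Matrix.single_mul_single_of_ne (a j) 0 j _ hji c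
    · intro hnot
      exact absurd (Finset.mem_filter.mpr ⟨Finset.mem_univ i, hi0⟩) hnot
  have hNN : N * N = 0 := by
    rw [hN, Matrix.sum_mul]
    apply Finset.sum_eq_zero
    intro i hi
    rw [Matrix.mul_sum]
    apply Finset.sum_eq_zero
    intro j _
    exact Matrix.single_mul_single_of_ne (a i) 0 i _ (Finset.mem_filter.mp hi).2 (a j)
  have zz : ∀ (i j : Fin (n + 3)) (c d : A), j ≠ 0 →
      Matrix.single i 0 c * Matrix.single j 0 d =
        (0 : Matrix (Fin (n + 3)) (Fin (n + 3)) A) := by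
    intro i j c d hj
    exact Matrix.single_mul_single_of_ne c i 0 _ (Ne.symm hj) d
  have c1 : Matrix.single k 0 (a l * b * q ^ 2) =
      q • (Matrix.single k 0 (a l * b * q) :
        Matrix (Fin (n + 3)) (Fin (n + 3)) A) := by
    rw [Matrix.smul_single, smul_eq_mul]
    congr 1
    ring
  have c2 : Matrix.single l 0 (a k * b * q ^ 2) =
      q • (Matrix.single l 0 (a k * b * q) :
        Matrix (Fin (n + 3)) (Fin (n + 3)) A) := by
    rw [Matrix.smul_single, smul_eq_mul]
    congr 1
    ring
  have hNKx : N * Matrix.single k 0 (a l * b * q) =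
      (Matrix.single 0 0 (a k * (a l * b * q)) :
        Matrix (Fin (n + 3)) (Fin (n + 3)) A) := hNmul k (a l * b * q) hk
  have hNLy : N * Matrix.single l 0 (a k * b * q) =
      (Matrix.single 0 0 (a k * (a l * b * q)) :
        Matrix (Fin (n + 3)) (Fin (n + 3)) A) :=
    (hNmul l (a k * b * q) hl).trans
      (congrArg (Matrix.single 0 0) (by ring))
  -- abstract algebra
  have hP : Matrix.single k 0 (a l * b * q ^ 2) * N -
      Matrix.single l 0 (a k * b * q ^ 2) * N =
      q • ((Matrix.single k 0 (a l * b * q) -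
        Matrix.single l 0 (a k * b * q)) * N) :=
    sub_smul_mul' q _ _ _ _ N c1 c2
  have h2 : N * Matrix.single k 0 (a l * b * q ^ 2) =
      N * (Matrix.single l 0 (a k * b * q ^ 2) :
        Matrix (Fin (n + 3)) (Fin (n + 3)) A) :=
    mul_smul_eq' q N _ _ _ hNKx hNLy _ _ c1 c2
  have h3 : N * (Matrix.single k 0 (a l * b * q) -
      Matrix.single l 0 (a k * b * q)) =
      (0 : Matrix (Fin (n + 3)) (Fin (n + 3)) A) :=
    mul_sub_cancel' N _ _ _ hNKx hNLy
  have h5 : Matrix.single k 0 (a l * b * q ^ 2) *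
      (Matrix.single l 0 (a k * b * q ^ 2) :
        Matrix (Fin (n + 3)) (Fin (n + 3)) A) =
      (0 : Matrix (Fin (n + 3)) (Fin (n + 3)) A) :=
    zz k l _ _ hl
  have h6 : Matrix.single k 0 (a l * b * q ^ 2) *
      (Matrix.single k 0 (a l * b * q) -
        (Matrix.single l 0 (a k * b * q) :
          Matrix (Fin (n + 3)) (Fin (n + 3)) A)) =
      (0 : Matrix (Fin (n + 3)) (Fin (n + 3)) A) :=
    mul_sub_zero' _ _ _ (zz k k _ _ hk) (zz k l _ _ hl)
  have h7 : Matrix.single l 0 (a k * b * q ^ 2) *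
      (Matrix.single k 0 (a l * b * q) -
        (Matrix.single l 0 (a k * b * q) :
          Matrix (Fin (n + 3)) (Fin (n + 3)) A)) =
      (0 : Matrix (Fin (n + 3)) (Fin (n + 3)) A) :=
    mul_sub_zero' _ _ _ (zz l k _ _ hk) (zz l l _ _ hl)
  obtain ⟨hkey1, hkey2, hkey3⟩ := alg_main' q N
    (Matrix.single k 0 (a l * b * q) - Matrix.single l 0 (a k * b * q))
    (Matrix.single k 0 (a l * b * q ^ 2))
    (Matrix.single l 0 (a k * b * q ^ 2))
    hP h2 h3 hNN h5 h6 h7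
  -- determinant of ρ
  have hdetρ : (1 + Matrix.single k 0 (a l * b * q ^ 2)
      - Matrix.single l 0 (a k * b * q ^ 2) :
        Matrix (Fin (n + 3)) (Fin (n + 3)) A).det = 1 := by
    have d1 : (1 + Matrix.single k 0 (a l * b * q ^ 2) :
        Matrix (Fin (n + 3)) (Fin (n + 3)) A).det = 1 := by
      have h := Matrix.det_transvection_of_ne k 0 hk (a l * b * q ^ 2)
      rwa [Matrix.transvection] at h
    have d2 : ((1 : Matrix (Fin (n + 3)) (Fin (n + 3)) A)
        - Matrix.single l 0 (a k * b * q ^ 2)).det = 1 := by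
      have h := Matrix.det_transvection_of_ne l 0 hl (-(a k * b * q ^ 2))
      rw [Matrix.transvection, stdB_neg, ← sub_eq_add_neg] at h
      exact h
    calc (1 + Matrix.single k 0 (a l * b * q ^ 2)
          - Matrix.single l 0 (a k * b * q ^ 2) :
            Matrix (Fin (n + 3)) (Fin (n + 3)) A).det
        = (((1 + Matrix.single k 0 (a l * b * q ^ 2) :
              Matrix (Fin (n + 3)) (Fin (n + 3)) A)) *
            ((1 : Matrix (Fin (n + 3)) (Fin (n + 3)) A)
              - Matrix.single l 0 (a k * b * q ^ 2))).det :=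
          (congrArg Matrix.det hkey3).symm
      _ = (1 + Matrix.single k 0 (a l * b * q ^ 2) :
            Matrix (Fin (n + 3)) (Fin (n + 3)) A).det *
          ((1 : Matrix (Fin (n + 3)) (Fin (n + 3)) A)
            - Matrix.single l 0 (a k * b * q ^ 2)).det := Matrix.det_mul _ _
      _ = 1 := by rw [d1, d2, one_mul]
  refine ⟨hdetρ, ?_⟩
  -- the conjugated elementary matrices
  obtain ⟨τ₁, hτ₁E, hτ₁⟩ := hii (a l * b) (Ideal.mul_mem_left 𝔭 _ hb) k hk
  obtain ⟨τ₂, hτ₂E, hτ₂⟩ := hii (-(a k * b)) (neg_mem (Ideal.mul_mem_left 𝔭 _ hb)) l hl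
  have hτ₁' : f.mapMatrix (τ₁ : Matrix (Fin (n + 3)) (Fin (n + 3)) A) =
      f.mapMatrix σ *
        f.mapMatrix (1 + Matrix.single k 0 (a l * b * q ^ 2)) *
        (f.mapMatrix σ)⁻¹ := hτ₁
  have hneg : (1 : Matrix (Fin (n + 3)) (Fin (n + 3)) A) +
      Matrix.single l 0 (-(a k * b) * q ^ 2) =
      1 - Matrix.single l 0 (a k * b * q ^ 2) := by
    rw [show -(a k * b) * q ^ 2 = -(a k * b * q ^ 2) by ring, stdB_neg,
      ← sub_eq_add_neg]
  rw [hneg] at hτ₂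
  -- invertibility of the mapped σ
  have hinjf : Function.Injective f := IsFractionRing.injective A (FractionRing A)
  have hinv := alg_inv' q N hNN
  have hdet1 : σ.det * ((q • (1 : Matrix (Fin (n + 3)) (Fin (n + 3)) A)) - N).det =
      (q * q) ^ (n + 3) := by
    calc σ.det * ((q • (1 : Matrix (Fin (n + 3)) (Fin (n + 3)) A)) - N).det
        = (σ * ((q • (1 : Matrix (Fin (n + 3)) (Fin (n + 3)) A)) - N)).det :=
          (Matrix.det_mul _ _).symm
      _ = ((q * q) • (1 : Matrix (Fin (n + 3)) (Fin (n + 3)) A)).det := by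
          rw [hσN, hinv]
      _ = (q * q) ^ (n + 3) := by
          rw [Matrix.det_smul, Matrix.det_one, mul_one, Fintype.card_fin]
  have hσdet_ne : σ.det ≠ 0 := by
    intro h0
    apply pow_ne_zero (n + 3) (mul_ne_zero hq hq)
    rw [← hdet1, h0, zero_mul]
  have hdetFσ : IsUnit ((f.mapMatrix σ).det) := by
    rw [isUnit_iff_ne_zero, ← RingHom.map_det]
    intro h
    exact hσdet_ne (hinjf (h.trans (map_zero f).symm))
  -- injectivity of the matrix map
  have hinjF : ∀ M M' : Matrix (Fin (n + 3)) (Fin (n + 3)) A,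
      f.mapMatrix M = f.mapMatrix M' → M = M' := by
    intro M M' hMM'
    ext i j
    apply hinjf
    have h := congrArg (fun X => X i j) hMM'
    simpa [RingHom.mapMatrix_apply, Matrix.map_apply] using h
  -- the coercion of τ₁ * τ₂ equals θ
  have hmapkey : f.mapMatrix (1 + Matrix.single k 0 (a l * b * q ^ 2)
        - Matrix.single l 0 (a k * b * q ^ 2)
        - (Matrix.single k 0 (a l * b * q)
          - Matrix.single l 0 (a k * b * q)) * N) * f.mapMatrix σ =
      f.mapMatrix σ *
        (f.mapMatrix (1 + Matrix.single k 0 (a l * b * q ^ 2)) *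
          f.mapMatrix ((1 : Matrix (Fin (n + 3)) (Fin (n + 3)) A)
            - Matrix.single l 0 (a k * b * q ^ 2))) := by
    rw [← map_mul, ← map_mul, ← map_mul, hσN, hkey1]
  have hθcoe : ((τ₁ * τ₂ : Matrix.SpecialLinearGroup (Fin (n + 3)) A) :
      Matrix (Fin (n + 3)) (Fin (n + 3)) A) =
      1 + Matrix.single k 0 (a l * b * q ^ 2)
        - Matrix.single l 0 (a k * b * q ^ 2)
        - (Matrix.single k 0 (a l * b * q)
          - Matrix.single l 0 (a k * b * q)) * N := by
    apply hinjF
    calc f.mapMatrix ((τ₁ * τ₂ : Matrix.SpecialLinearGroup (Fin (n + 3)) A) :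
          Matrix (Fin (n + 3)) (Fin (n + 3)) A)
        = f.mapMatrix (τ₁ : Matrix (Fin (n + 3)) (Fin (n + 3)) A) *
          f.mapMatrix (τ₂ : Matrix (Fin (n + 3)) (Fin (n + 3)) A) := by
          rw [Matrix.SpecialLinearGroup.coe_mul, map_mul]
      _ = (f.mapMatrix σ *
            f.mapMatrix (1 + Matrix.single k 0 (a l * b * q ^ 2)) *
            (f.mapMatrix σ)⁻¹) *
          (f.mapMatrix σ *
            f.mapMatrix ((1 : Matrix (Fin (n + 3)) (Fin (n + 3)) A)
              - Matrix.single l 0 (a k * b * q ^ 2)) *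
            (f.mapMatrix σ)⁻¹) := by rw [hτ₁', hτ₂]
      _ = f.mapMatrix σ *
            (f.mapMatrix (1 + Matrix.single k 0 (a l * b * q ^ 2)) *
              (((f.mapMatrix σ)⁻¹ * f.mapMatrix σ) *
                f.mapMatrix ((1 : Matrix (Fin (n + 3)) (Fin (n + 3)) A)
                  - Matrix.single l 0 (a k * b * q ^ 2)))) *
            (f.mapMatrix σ)⁻¹ := by simp only [mul_assoc]
      _ = f.mapMatrix σ *
            (f.mapMatrix (1 + Matrix.single k 0 (a l * b * q ^ 2)) *
              f.mapMatrix ((1 : Matrix (Fin (n + 3)) (Fin (n + 3)) A)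
                - Matrix.single l 0 (a k * b * q ^ 2))) *
            (f.mapMatrix σ)⁻¹ := by
          rw [Matrix.nonsing_inv_mul _ hdetFσ, one_mul]
      _ = f.mapMatrix (1 + Matrix.single k 0 (a l * b * q ^ 2)
            - Matrix.single l 0 (a k * b * q ^ 2)
            - (Matrix.single k 0 (a l * b * q)
              - Matrix.single l 0 (a k * b * q)) * N) *
          f.mapMatrix σ * (f.mapMatrix σ)⁻¹ := by rw [← hmapkey]
      _ = f.mapMatrix (1 + Matrix.single k 0 (a l * b * q ^ 2)
            - Matrix.single l 0 (a k * b * q ^ 2)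
            - (Matrix.single k 0 (a l * b * q)
              - Matrix.single l 0 (a k * b * q)) * N) := by
          rw [mul_assoc, Matrix.mul_nonsing_inv _ hdetFσ, mul_one]
  have hdetθ : (1 + Matrix.single k 0 (a l * b * q ^ 2)
      - Matrix.single l 0 (a k * b * q ^ 2)
      - (Matrix.single k 0 (a l * b * q)
        - Matrix.single l 0 (a k * b * q)) * N).det = 1 := by
    rw [← hθcoe]
    exact (τ₁ * τ₂).prop
  have hdetD : ((1 : Matrix (Fin (n + 3)) (Fin (n + 3)) A) +
      (Matrix.single k 0 (a l * b * q)
        - Matrix.single l 0 (a k * b * q)) * N).det = 1 := by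
    have h2d : (1 + Matrix.single k 0 (a l * b * q ^ 2)
        - Matrix.single l 0 (a k * b * q ^ 2)
        - (Matrix.single k 0 (a l * b * q)
          - Matrix.single l 0 (a k * b * q)) * N).det *
        ((1 : Matrix (Fin (n + 3)) (Fin (n + 3)) A) +
          (Matrix.single k 0 (a l * b * q)
            - Matrix.single l 0 (a k * b * q)) * N).det =
        (1 + Matrix.single k 0 (a l * b * q ^ 2)
          - Matrix.single l 0 (a k * b * q ^ 2) :
            Matrix (Fin (n + 3)) (Fin (n + 3)) A).det := by
      rw [← Matrix.det_mul, hkey2]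
    rw [hdetθ, one_mul, hdetρ] at h2d
    exact h2d
  -- entries of P
  have hNcol : ∀ m : Fin (n + 3), N m 0 = 0 := by
    intro m
    rw [hN, Matrix.sum_apply]
    apply Finset.sum_eq_zero
    intro j hj
    exact Matrix.single_apply_of_ne _ _ _ _ _
      (fun h => (Finset.mem_filter.mp hj).2 h.2)
  have hProw : ∀ j : Fin (n + 3),
      (((Matrix.single k 0 (a l * b * q)
        - Matrix.single l 0 (a k * b * q)) * N :
          Matrix (Fin (n + 3)) (Fin (n + 3)) A)) 0 j = 0 := by
    intro j
    rw [Matrix.mul_apply]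
    apply Finset.sum_eq_zero
    intro m _
    rw [Matrix.sub_apply,
      Matrix.single_apply_of_ne _ _ _ _ _ (fun h => hk h.1),
      Matrix.single_apply_of_ne _ _ _ _ _ (fun h => hl h.1),
      sub_self, zero_mul]
  have hPcol : ∀ i : Fin (n + 3),
      (((Matrix.single k 0 (a l * b * q)
        - Matrix.single l 0 (a k * b * q)) * N :
          Matrix (Fin (n + 3)) (Fin (n + 3)) A)) i 0 = 0 := by
    intro i
    rw [Matrix.mul_apply]
    apply Finset.sum_eq_zero
    intro m _
    rw [hNcol m, mul_zero]
  obtain ⟨μ, hμE, hμcoe⟩ := blockMem ℰ hi hSLE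
    ((1 : Matrix (Fin (n + 3)) (Fin (n + 3)) A) +
      (Matrix.single k 0 (a l * b * q)
        - Matrix.single l 0 (a k * b * q)) * N)
    hdetD
    (by rw [Matrix.add_apply, Matrix.one_apply_eq, hProw 0, add_zero])
    (fun j hj => by
      rw [Matrix.add_apply, Matrix.one_apply_ne (Ne.symm hj), hProw j, add_zero])
    (fun i hi' => by
      rw [Matrix.add_apply, Matrix.one_apply_ne hi', hPcol i, add_zero])
  -- conclusion
  intro τ hτ
  have hco : (τ : Matrix (Fin (n + 3)) (Fin (n + 3)) A) =
      ((τ₁ * τ₂ * μ : Matrix.SpecialLinearGroup (Fin (n + 3)) A) :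
        Matrix (Fin (n + 3)) (Fin (n + 3)) A) := by
    rw [hτ]
    calc (1 + Matrix.single k 0 (a l * b * q ^ 2)
          - Matrix.single l 0 (a k * b * q ^ 2) :
            Matrix (Fin (n + 3)) (Fin (n + 3)) A)
        = (1 + Matrix.single k 0 (a l * b * q ^ 2)
            - Matrix.single l 0 (a k * b * q ^ 2)
            - (Matrix.single k 0 (a l * b * q)
              - Matrix.single l 0 (a k * b * q)) * N) *
          ((1 : Matrix (Fin (n + 3)) (Fin (n + 3)) A) +
            (Matrix.single k 0 (a l * b * q)
              - Matrix.single l 0 (a k * b * q)) * N) := hkey2.symm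
      _ = ((τ₁ * τ₂ : Matrix.SpecialLinearGroup (Fin (n + 3)) A) :
            Matrix (Fin (n + 3)) (Fin (n + 3)) A) *
          ((μ : Matrix.SpecialLinearGroup (Fin (n + 3)) A) :
            Matrix (Fin (n + 3)) (Fin (n + 3)) A) :=
          (congrArg₂ (fun (Xa Xb : Matrix (Fin (n + 3)) (Fin (n + 3)) A) => Xa * Xb)
            hθcoe hμcoe).symm
      _ = ((τ₁ * τ₂ * μ : Matrix.SpecialLinearGroup (Fin (n + 3)) A) :
            Matrix (Fin (n + 3)) (Fin (n + 3)) A) :=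
          (Matrix.SpecialLinearGroup.coe_mul _ _).symm
  have hτeq : τ = τ₁ * τ₂ * μ := Subtype.coe_injective hco
  rw [hτeq]
  exact mul_mem (mul_mem hτ₁E hτ₂E) hμE
end

section
/- (Lemma 6.10(1) of the paper) For every f ∈ F̃' and every g ∈ F̃: π(f∘g) = π(g) + π(f)∘χ(g) and π(g∘f) = χ(g)∘π(f) + π(g), where π(f)∘χ(g) denotes the (exact) substitution of the linear tuple χ(g) into the tuple of forms π(f), and χ(g)∘π(f) denotes the substitution of the tuple π(f) into the linear tuple χ(g). In particular, if also g ∈ F̃', then π(f∘g) = π(f) + π(g). -/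
/-- Truncation modulo `I^k`: the sum of the homogeneous components of degree `< k`
(`I` being the ideal of polynomials with zero constant term). -/
noncomputable def truncLT {A : Type*} [CommRing A] {σ : Type*} (k : ℕ)
    (p : MvPolynomial σ A) : MvPolynomial σ A :=
  ∑ d ∈ Finset.range k, MvPolynomial.homogeneousComponent d p

/-- Composition of tuples of polynomials modulo `I^k`: substitute the tuple `g`
for the variables in `f`, then delete all monomials of total degree `≥ k`. -/
noncomputable def polyComp {A : Type*} [CommRing A] {σ : Type*} (k : ℕ)
    (f g : σ → MvPolynomial σ A) : σ → MvPolynomial σ A :=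
  fun i => truncLT k (MvPolynomial.bind₁ g (f i))

/-- `f ∈ F̃`: each component has zero constant term and total degree `≤ k − 1`. -/
def memFtilde {A : Type*} [CommRing A] {σ : Type*} (k : ℕ)
    (f : σ → MvPolynomial σ A) : Prop :=
  ∀ i, MvPolynomial.coeff 0 (f i) = 0 ∧ (f i).totalDegree ≤ k - 1

/-- `χ(f)`: the tuple of degree-1 homogeneous components. -/
noncomputable def chiLin {A : Type*} [CommRing A] {σ : Type*}
    (f : σ → MvPolynomial σ A) : σ → MvPolynomial σ A :=
  fun i => MvPolynomial.homogeneousComponent 1 (f i)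

/-- `π(f)`: the tuple of degree-(k−1) homogeneous components. -/
noncomputable def piTop {A : Type*} [CommRing A] {σ : Type*} (k : ℕ)
    (f : σ → MvPolynomial σ A) : σ → MvPolynomial σ A :=
  fun i => MvPolynomial.homogeneousComponent (k - 1) (f i)

/-- `f ∈ F̃'`: `f ∈ F̃` and `f(u) = u + π(f)(u)`. -/
def memFtilde' {A : Type*} [CommRing A] {σ : Type*} (k : ℕ)
    (f : σ → MvPolynomial σ A) : Prop :=
  memFtilde k f ∧ ∀ i, f i - MvPolynomial.homogeneousComponent (k - 1) (f i) =
    MvPolynomial.X i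

section AuxLemma610

open MvPolynomial Finset


namespace Lemma610

variable {A : Type*} [CommRing A] {σ : Type*}

/-- All monomials of `p` have total degree at least `c`. -/
def Dlb (c : ℕ) (p : MvPolynomial σ A) : Prop :=
  ∀ s : σ →₀ ℕ, p.coeff s ≠ 0 → c ≤ s.degree

lemma Dlb.mono {c c' : ℕ} (h : c' ≤ c) {p : MvPolynomial σ A} (hp : Dlb c p) : Dlb c' p :=
  fun s hs => le_trans h (hp s hs)

lemma dlb_zero (c : ℕ) : Dlb c (0 : MvPolynomial σ A) := by
  intro s hs; simp at hs

lemma dlb_zero' (p : MvPolynomial σ A) : Dlb 0 p := fun _ _ => Nat.zero_le _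

lemma Dlb.add {c : ℕ} {p q : MvPolynomial σ A} (hp : Dlb c p) (hq : Dlb c q) :
    Dlb c (p + q) := by
  intro s hs
  rw [coeff_add] at hs
  by_cases h : coeff s p = 0
  · exact hq s (by simpa [h] using hs)
  · exact hp s h

lemma dlb_sum {c : ℕ} {ι : Type*} (t : Finset ι) (F : ι → MvPolynomial σ A)
    (h : ∀ i ∈ t, Dlb c (F i)) : Dlb c (∑ i ∈ t, F i) := by
  classical
  induction t using Finset.induction with
  | empty => simpa using dlb_zero c
  | insert _ _ ha ih =>
    rw [Finset.sum_insert ha]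
    exact (h _ (Finset.mem_insert_self _ _)).add
      (ih fun i hi => h i (Finset.mem_insert_of_mem hi))

lemma degree_add (a b : σ →₀ ℕ) : (a + b).degree = a.degree + b.degree := by
  rw [Finsupp.degree_eq_weight_one]
  exact map_add _ a b

lemma Dlb.mul {c d : ℕ} {p q : MvPolynomial σ A} (hp : Dlb c p) (hq : Dlb d q) :
    Dlb (c + d) (p * q) := by
  classical
  intro s hs
  rw [coeff_mul] at hs
  obtain ⟨x, hx, hne⟩ := Finset.exists_ne_zero_of_sum_ne_zero hs
  rw [Finset.HasAntidiagonal.mem_antidiagonal] at hx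
  have h1 : coeff x.1 p ≠ 0 := left_ne_zero_of_mul hne
  have h2 : coeff x.2 q ≠ 0 := right_ne_zero_of_mul hne
  have := add_le_add (hp _ h1) (hq _ h2)
  rwa [← degree_add, hx] at this

lemma Dlb.pow {p : MvPolynomial σ A} (hp : Dlb 1 p) (n : ℕ) : Dlb n (p ^ n) := by
  induction n with
  | zero => simpa using dlb_zero' (1 : MvPolynomial σ A)
  | succ n ih =>
    rw [pow_succ]
    exact (ih.mul hp).mono (by omega)

lemma Dlb.C_mul {c : ℕ} {p : MvPolynomial σ A} (hp : Dlb c p) (a : A) :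
    Dlb c (C a * p) := by
  intro s hs
  rw [coeff_C_mul] at hs
  exact hp s (right_ne_zero_of_mul hs)

lemma homog_dlb {p : MvPolynomial σ A} {n : ℕ} (hp : p.IsHomogeneous n) :
    Dlb n p := by
  intro s hs
  rw [Finsupp.degree_eq_weight_one]
  exact le_of_eq (hp hs).symm

lemma homog_degree_eq {p : MvPolynomial σ A} {n : ℕ} (hp : p.IsHomogeneous n)
    {s : σ →₀ ℕ} (hs : coeff s p ≠ 0) : s.degree = n := by
  rw [Finsupp.degree_eq_weight_one]; exact hp hs

lemma Dlb.homogeneousComponent_eq_zero {c e : ℕ} {p : MvPolynomial σ A}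
    (hp : Dlb c p) (h : e < c) : homogeneousComponent e p = 0 := by
  ext s
  rw [coeff_homogeneousComponent, coeff_zero]
  split_ifs with hd
  · by_contra hne
    have := hp s hne
    omega
  · rfl

lemma pow_diff {m : ℕ} (hm : 1 ≤ m) {u v : MvPolynomial σ A}
    (hu : Dlb 1 u) (hv : Dlb m v) :
    ∀ n : ℕ, Dlb (n - 1 + m) ((u + v) ^ n - u ^ n) := by
  intro n
  induction n with
  | zero => simpa using dlb_zero m
  | succ n ih =>
    have key : (u + v) ^ (n + 1) - u ^ (n + 1)
        = (u + v) * ((u + v) ^ n - u ^ n) + v * u ^ n := by ring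
    rw [key]
    have h1 : Dlb 1 (u + v) := hu.add (hv.mono hm)
    exact ((h1.mul ih).mono (by omega)).add ((hv.mul (hu.pow n)).mono (by omega))

lemma dlb_prod_pow (q : σ → MvPolynomial σ A) (nn : σ → ℕ) (t : Finset σ)
    (hq : ∀ j ∈ t, Dlb 1 (q j)) : Dlb (∑ j ∈ t, nn j) (∏ j ∈ t, q j ^ nn j) := by
  classical
  induction t using Finset.induction with
  | empty => simpa using dlb_zero' (1 : MvPolynomial σ A)
  | insert _ _ ha ih =>
    rw [Finset.prod_insert ha, Finset.sum_insert ha]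
    exact ((hq _ (Finset.mem_insert_self _ _)).pow _).mul
      (ih fun j hj => hq j (Finset.mem_insert_of_mem hj))

lemma prod_diff {m : ℕ} (hm : 1 ≤ m) (p q : σ → MvPolynomial σ A) (nn : σ → ℕ)
    (t : Finset σ) (hp : ∀ j ∈ t, Dlb 1 (p j)) (hq : ∀ j ∈ t, Dlb 1 (q j))
    (hd : ∀ j ∈ t, Dlb (nn j - 1 + m) (p j ^ nn j - q j ^ nn j)) :
    Dlb ((∑ j ∈ t, nn j) - 1 + m) (∏ j ∈ t, p j ^ nn j - ∏ j ∈ t, q j ^ nn j) := by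
  classical
  induction t using Finset.induction with
  | empty => simpa using dlb_zero m
  | @insert a t ha ih =>
    rw [Finset.prod_insert ha, Finset.prod_insert ha, Finset.sum_insert ha]
    have key : p a ^ nn a * ∏ j ∈ t, p j ^ nn j - q a ^ nn a * ∏ j ∈ t, q j ^ nn j
        = p a ^ nn a * (∏ j ∈ t, p j ^ nn j - ∏ j ∈ t, q j ^ nn j)
          + (p a ^ nn a - q a ^ nn a) * ∏ j ∈ t, q j ^ nn j := by ring
    rw [key]
    have t1 : Dlb (nn a + ((∑ j ∈ t, nn j) - 1 + m))
        (p a ^ nn a * (∏ j ∈ t, p j ^ nn j - ∏ j ∈ t, q j ^ nn j)) :=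
      ((hp a (Finset.mem_insert_self _ _)).pow _).mul
        (ih (fun j hj => hp j (Finset.mem_insert_of_mem hj))
          (fun j hj => hq j (Finset.mem_insert_of_mem hj))
          (fun j hj => hd j (Finset.mem_insert_of_mem hj)))
    have t2 : Dlb ((nn a - 1 + m) + ∑ j ∈ t, nn j)
        ((p a ^ nn a - q a ^ nn a) * ∏ j ∈ t, q j ^ nn j) :=
      (hd a (Finset.mem_insert_self _ _)).mul
        (dlb_prod_pow q nn t fun j hj => hq j (Finset.mem_insert_of_mem hj))
    exact (t1.mono (by omega)).add (t2.mono (by omega))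

lemma bind_diff {m : ℕ} (hm : 1 ≤ m) (φ ψ : σ → MvPolynomial σ A)
    (hφ : ∀ j, Dlb 1 (φ j)) (hψ : ∀ j, Dlb 1 (ψ j)) (hdiff : ∀ j, Dlb m (φ j - ψ j))
    {p : MvPolynomial σ A} {d : ℕ} (hp : p.IsHomogeneous d) :
    Dlb (d - 1 + m) (bind₁ φ p - bind₁ ψ p) := by
  have h1 : ∀ F : σ → MvPolynomial σ A,
      bind₁ F p = ∑ s ∈ p.support, C (coeff s p) * ∏ j ∈ s.support, F j ^ s j := by
    intro F
    conv_lhs => rw [p.as_sum]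
    rw [map_sum]
    exact Finset.sum_congr rfl fun s _ => bind₁_monomial F s (coeff s p)
  rw [h1 φ, h1 ψ, ← Finset.sum_sub_distrib]
  apply dlb_sum
  intro s hs
  rw [← mul_sub]
  have hsd : s.degree = d := homog_degree_eq hp (mem_support_iff.mp hs)
  have hdd : Dlb ((∑ j ∈ s.support, s j) - 1 + m)
      (∏ j ∈ s.support, φ j ^ s j - ∏ j ∈ s.support, ψ j ^ s j) := by
    apply prod_diff hm φ ψ s s.support (fun j _ => hφ j) (fun j _ => hψ j)
    intro j _
    have := pow_diff hm (hψ j) (hdiff j) (s j)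
    rwa [show ψ j + (φ j - ψ j) = φ j by ring] at this
  have hds : ∑ j ∈ s.support, s j = d := by rw [← hsd]; rfl
  rw [hds] at hdd
  exact hdd.C_mul _

lemma degree_one_single {s : σ →₀ ℕ} (h : s.degree = 1) :
    ∃ j, s = Finsupp.single j 1 := by
  classical
  have hs0 : s ≠ 0 := by
    intro h0; rw [h0] at h; simp at h
  obtain ⟨j, hj⟩ := Finsupp.support_nonempty_iff.mpr hs0
  have hdeg : s.degree = ∑ i ∈ s.support, s i := rfl
  have hj1 : 1 ≤ s j := Nat.one_le_iff_ne_zero.mpr (Finsupp.mem_support_iff.mp hj)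
  have hsplit : s j + ∑ i ∈ s.support.erase j, s i = ∑ i ∈ s.support, s i :=
    Finset.add_sum_erase _ _ hj
  have hrest : ∑ i ∈ s.support.erase j, s i = 0 := by omega
  have hsj : s j = 1 := by omega
  refine ⟨j, ?_⟩
  ext i
  rcases eq_or_ne i j with rfl | hne
  · simp [hsj]
  · rw [Finsupp.single_apply, if_neg (Ne.symm hne)]
    by_contra hne0
    have hi : i ∈ s.support.erase j :=
      Finset.mem_erase.mpr ⟨hne, Finsupp.mem_support_iff.mpr hne0⟩
    have := (Finset.sum_eq_zero_iff.mp hrest) i hi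
    exact hne0 this

lemma bind₁_monomial_single (F : σ → MvPolynomial σ A) (j : σ) (a : A) :
    bind₁ F (monomial (Finsupp.single j 1) a) = C a * F j := by
  classical
  rw [bind₁_monomial, Finsupp.support_single_ne_zero j one_ne_zero]
  simp

lemma bind₁_linear_add (φ ψ : σ → MvPolynomial σ A) {p : MvPolynomial σ A}
    (hp : p.IsHomogeneous 1) :
    bind₁ (fun j => φ j + ψ j) p = bind₁ φ p + bind₁ ψ p := by
  have key : ∀ s ∈ p.support,
      bind₁ (fun j => φ j + ψ j) (monomial s (coeff s p))
        = bind₁ φ (monomial s (coeff s p)) + bind₁ ψ (monomial s (coeff s p)) := by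
    intro s hs
    obtain ⟨j, rfl⟩ := degree_one_single (homog_degree_eq hp (mem_support_iff.mp hs))
    rw [bind₁_monomial_single, bind₁_monomial_single, bind₁_monomial_single, mul_add]
  conv_lhs => rw [p.as_sum]
  rw [map_sum, Finset.sum_congr rfl key, Finset.sum_add_distrib, ← map_sum, ← map_sum,
    ← p.as_sum]

lemma homogComponent_of_homog {m n : ℕ} {p : MvPolynomial σ A} (h : p.IsHomogeneous n) :
    homogeneousComponent m p = if m = n then p else 0 :=
  homogeneousComponent_of_mem ((mem_homogeneousSubmodule _ _).mpr h)

lemma homog_bind₁ {e d : ℕ} {p : MvPolynomial σ A} (hp : p.IsHomogeneous d)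
    (φ : σ → MvPolynomial σ A) (hφ : ∀ j, (φ j).IsHomogeneous e) :
    (bind₁ φ p).IsHomogeneous (e * d) :=
  hp.aeval φ hφ

lemma trunc_comp {k e : ℕ} (h : e < k) (p : MvPolynomial σ A) :
    homogeneousComponent e (truncLT k p) = homogeneousComponent e p := by
  unfold truncLT
  rw [map_sum (homogeneousComponent e) (fun d => homogeneousComponent d p) (range k)]
  calc ∑ d ∈ range k, homogeneousComponent e (homogeneousComponent d p)
      = ∑ d ∈ range k, if e = d then homogeneousComponent d p else 0 :=
        Finset.sum_congr rfl fun d _ =>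
          homogComponent_of_homog (homogeneousComponent_isHomogeneous d p)
    _ = if e ∈ range k then homogeneousComponent e p else 0 := Finset.sum_ite_eq _ _ _
    _ = homogeneousComponent e p := if_pos (Finset.mem_range.mpr h)

lemma sum_homog_range {p : MvPolynomial σ A} {k : ℕ} (h : p.totalDegree < k) :
    ∑ d ∈ range k, homogeneousComponent d p = p := by
  have h1 := sum_homogeneousComponent (φ := p)
  refine ((Finset.sum_subset (Finset.range_subset_range.mpr h) ?_).symm).trans h1
  intro d _ hd
  rw [Finset.mem_range, not_lt] at hd
  apply homogeneousComponent_eq_zero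
  omega

end Lemma610


end AuxLemma610

open MvPolynomial Finset Lemma610

/-- **Lemma 6.10(1) of the paper.** For `f ∈ F̃'` and `g ∈ F̃` (tuples of
polynomials in `n−1` variables, `n ≥ 2`, `k ≥ 2`):
`π(f∘g) = π(g) + π(f)∘χ(g)` and `π(g∘f) = χ(g)∘π(f) + π(g)`, where the outer
compositions are exact substitutions.  In particular, if also `g ∈ F̃'`, then
`π(f∘g) = π(f) + π(g)`. -/
theorem lemma_6_10_1 (A : Type*) [CommRing A] (n k : ℕ) (hn : 2 ≤ n) (hk : 2 ≤ k)
    (f g : Fin (n - 1) → MvPolynomial (Fin (n - 1)) A)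
    (hf : memFtilde' k f) (hg : memFtilde k g) :
    (∀ i, piTop k (polyComp k f g) i
        = piTop k g i + MvPolynomial.bind₁ (chiLin g) (piTop k f i))
    ∧ (∀ i, piTop k (polyComp k g f) i
        = MvPolynomial.bind₁ (piTop k f) (chiLin g i) + piTop k g i)
    ∧ (memFtilde' k g →
        ∀ i, piTop k (polyComp k f g) i = piTop k f i + piTop k g i) := by
  rcases eq_or_lt_of_le hk with hk2 | hk3
  · -- k = 2: the hypothesis on f forces A to be trivial
    subst hk2
    have i0 : Fin (n - 1) := ⟨0, by omega⟩
    have hconst := (hf.1 i0).1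
    have hdeg : (f i0).totalDegree < 2 := by have := (hf.1 i0).2; omega
    have hsum : homogeneousComponent 0 (f i0) + homogeneousComponent 1 (f i0) = f i0 := by
      have := sum_homog_range (p := f i0) hdeg
      simpa [Finset.sum_range_succ] using this
    have hX0 : (MvPolynomial.X i0 : MvPolynomial (Fin (n-1)) A) = 0 := by
      have hXf := hf.2 i0
      norm_num at hXf
      rw [homogeneousComponent_zero, hconst, map_zero, zero_add] at hsum
      rw [← hXf, hsum, sub_self]
    have h10 : (1 : A) = 0 := by
      have := congrArg (MvPolynomial.coeff (Finsupp.single i0 1)) hX0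
      simpa using this
    have hA : Subsingleton A := subsingleton_of_zero_eq_one h10.symm
    have hP : Subsingleton (MvPolynomial (Fin (n-1)) A) := by
      constructor
      intro p q
      ext s
      exact Subsingleton.elim _ _
    exact ⟨fun i => Subsingleton.elim _ _, fun i => Subsingleton.elim _ _,
      fun _ i => Subsingleton.elim _ _⟩
  · -- 2 < k
    have hfX : ∀ i, f i = MvPolynomial.X i + piTop k f i := by
      intro i
      have := hf.2 i
      have h := sub_eq_iff_eq_add.mp this
      exact h
    have hπf : ∀ i, (piTop k f i).IsHomogeneous (k-1) :=
      fun i => homogeneousComponent_isHomogeneous _ _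
    have hπg : ∀ i, (piTop k g i).IsHomogeneous (k-1) :=
      fun i => homogeneousComponent_isHomogeneous _ _
    have hχg : ∀ i, (chiLin g i).IsHomogeneous 1 :=
      fun i => homogeneousComponent_isHomogeneous _ _
    have hg1 : ∀ j, Dlb 1 (g j) := by
      intro j s hs
      by_contra hlt
      have h0 : s.degree = 0 := by omega
      rw [Finsupp.degree_eq_zero_iff] at h0
      subst h0
      exact hs (hg j).1
    have hgχ2 : ∀ j, Dlb 2 (g j - chiLin g j) := by
      intro j s hs
      by_contra hlt
      rw [MvPolynomial.coeff_sub] at hs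
      show False
      rcases (by omega : s.degree = 0 ∨ s.degree = 1) with h0 | h1
      · have hs0 : s = 0 := (Finsupp.degree_eq_zero_iff s).mp h0
        subst hs0
        rw [(hg j).1] at hs
        apply hs
        show 0 - MvPolynomial.coeff 0 (homogeneousComponent 1 (g j)) = 0
        rw [coeff_homogeneousComponent]
        simp
      · apply hs
        show MvPolynomial.coeff s (g j) - MvPolynomial.coeff s (homogeneousComponent 1 (g j)) = 0
        rw [coeff_homogeneousComponent, if_pos h1, sub_self]
    have hfdlb : ∀ j, Dlb 1 (f j) := by
      intro j
      rw [hfX j]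
      exact (homog_dlb (MvPolynomial.isHomogeneous_X A j)).add
        ((homog_dlb (hπf j)).mono (by omega))
    have hfXd : ∀ j, Dlb (k-1) (f j - MvPolynomial.X j) := by
      intro j
      have : f j - MvPolynomial.X j = piTop k f j := by rw [hfX j]; ring
      rw [this]
      exact homog_dlb (hπf j)
    -- Part 1
    have part1 : ∀ i, piTop k (polyComp k f g) i
        = piTop k g i + MvPolynomial.bind₁ (chiLin g) (piTop k f i) := by
      intro i
      show homogeneousComponent (k-1) (truncLT k (MvPolynomial.bind₁ g (f i))) = _
      rw [trunc_comp (by omega)]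
      conv_lhs => rw [hfX i]
      rw [map_add, bind₁_X_right, map_add]
      congr 1
      have hd : Dlb ((k-1) - 1 + 2)
          (MvPolynomial.bind₁ g (piTop k f i) - MvPolynomial.bind₁ (chiLin g) (piTop k f i)) :=
        bind_diff (by omega) g (chiLin g) hg1 (fun j => homog_dlb (hχg j)) hgχ2 (hπf i)
      have hz : homogeneousComponent (k-1)
          (MvPolynomial.bind₁ g (piTop k f i) - MvPolynomial.bind₁ (chiLin g) (piTop k f i)) = 0 :=
        hd.homogeneousComponent_eq_zero (by omega)
      have hh : (MvPolynomial.bind₁ (chiLin g) (piTop k f i)).IsHomogeneous (k-1) := by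
        have := homog_bind₁ (hπf i) (chiLin g) hχg
        rwa [one_mul] at this
      calc homogeneousComponent (k-1) (MvPolynomial.bind₁ g (piTop k f i))
          = homogeneousComponent (k-1) (MvPolynomial.bind₁ (chiLin g) (piTop k f i))
            + homogeneousComponent (k-1)
              (MvPolynomial.bind₁ g (piTop k f i) - MvPolynomial.bind₁ (chiLin g) (piTop k f i)) := by
            rw [← map_add]
            congr 1
            ring
        _ = MvPolynomial.bind₁ (chiLin g) (piTop k f i) := by
            rw [hz, add_zero, homogComponent_of_homog hh, if_pos rfl]
    -- Part 2
    have part2 : ∀ i, piTop k (polyComp k g f) i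
        = MvPolynomial.bind₁ (piTop k f) (chiLin g i) + piTop k g i := by
      intro i
      show homogeneousComponent (k-1) (truncLT k (MvPolynomial.bind₁ f (g i))) = _
      rw [trunc_comp (by omega)]
      have hgdeg : (g i).totalDegree < k := by have := (hg i).2; omega
      conv_lhs => rw [← sum_homog_range hgdeg, map_sum, map_sum]
      have key : ∀ d ∈ range k,
          homogeneousComponent (k-1) (MvPolynomial.bind₁ f (homogeneousComponent d (g i)))
          = (if d = 1 then MvPolynomial.bind₁ (piTop k f) (chiLin g i) else 0)
            + (if d = k-1 then piTop k g i else 0) := by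
        intro d hd
        rcases Nat.lt_or_ge d 2 with hd2 | hd2
        · interval_cases d
          · rw [homogeneousComponent_zero, (hg i).1, map_zero, map_zero, map_zero]
            rw [if_neg (by omega), if_neg (by omega), add_zero]
          · -- d = 1
            have hq1 : (homogeneousComponent 1 (g i)).IsHomogeneous 1 :=
              homogeneousComponent_isHomogeneous _ _
            have hbind : MvPolynomial.bind₁ f (homogeneousComponent 1 (g i))
                = homogeneousComponent 1 (g i)
                  + MvPolynomial.bind₁ (piTop k f) (homogeneousComponent 1 (g i)) := by
              have h2 : MvPolynomial.bind₁ f (homogeneousComponent 1 (g i))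
                  = MvPolynomial.bind₁ (fun j => MvPolynomial.X j + piTop k f j)
                      (homogeneousComponent 1 (g i)) :=
                congrArg (fun F => MvPolynomial.bind₁ F (homogeneousComponent 1 (g i)))
                  (funext hfX)
              rw [h2, bind₁_linear_add _ _ hq1]
              congr 1
              have : MvPolynomial.bind₁ (MvPolynomial.X : _ → MvPolynomial (Fin (n-1)) A)
                  (homogeneousComponent 1 (g i)) = homogeneousComponent 1 (g i) := by
                rw [bind₁_X_left]; rfl
              exact this
            rw [hbind, map_add]
            have hz1 : homogeneousComponent (k-1) (homogeneousComponent 1 (g i)) = 0 := by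
              rw [homogComponent_of_homog hq1, if_neg (by omega)]
            have hh1 : (MvPolynomial.bind₁ (piTop k f)
                (homogeneousComponent 1 (g i))).IsHomogeneous (k-1) := by
              have := homog_bind₁ hq1 (piTop k f) hπf
              rwa [mul_one] at this
            rw [hz1, zero_add, homogComponent_of_homog hh1, if_pos rfl]
            rw [if_pos rfl, if_neg (by omega), add_zero]
            rfl
        · -- 2 ≤ d
          have hqd : (homogeneousComponent d (g i)).IsHomogeneous d :=
            homogeneousComponent_isHomogeneous _ _
          have hdiff : Dlb (d - 1 + (k-1))
              (MvPolynomial.bind₁ f (homogeneousComponent d (g i))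
                - MvPolynomial.bind₁ MvPolynomial.X (homogeneousComponent d (g i))) :=
            bind_diff (by omega) f MvPolynomial.X hfdlb
              (fun j => homog_dlb (MvPolynomial.isHomogeneous_X A j)) hfXd hqd
          have hbx : MvPolynomial.bind₁ (MvPolynomial.X : _ → MvPolynomial (Fin (n-1)) A)
              (homogeneousComponent d (g i)) = homogeneousComponent d (g i) := by
            rw [bind₁_X_left]; rfl
          rw [hbx] at hdiff
          have hz : homogeneousComponent (k-1)
              (MvPolynomial.bind₁ f (homogeneousComponent d (g i))
                - homogeneousComponent d (g i)) = 0 :=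
            hdiff.homogeneousComponent_eq_zero (by omega)
          calc homogeneousComponent (k-1) (MvPolynomial.bind₁ f (homogeneousComponent d (g i)))
              = homogeneousComponent (k-1) (homogeneousComponent d (g i))
                + homogeneousComponent (k-1)
                  (MvPolynomial.bind₁ f (homogeneousComponent d (g i))
                    - homogeneousComponent d (g i)) := by
                rw [← map_add]; congr 1; ring
            _ = (if d = 1 then MvPolynomial.bind₁ (piTop k f) (chiLin g i) else 0)
                + (if d = k-1 then piTop k g i else 0) := by
                rw [hz, add_zero, homogComponent_of_homog hqd]
                by_cases hne : d = k - 1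
                · subst hne
                  rw [if_pos rfl, if_neg (show ¬(k - 1 = 1) by omega), zero_add, if_pos rfl]
                  rfl
                · rw [if_neg (fun h => hne h.symm), if_neg (show ¬(d = 1) by omega),
                    if_neg hne]
                  simp
      rw [Finset.sum_congr rfl key, Finset.sum_add_distrib]
      congr 1
      · rw [Finset.sum_ite_eq' (range k) 1 (fun _ => MvPolynomial.bind₁ (piTop k f) (chiLin g i))]
        exact if_pos (Finset.mem_range.mpr (by omega))
      · rw [Finset.sum_ite_eq' (range k) (k-1) (fun _ => piTop k g i)]
        exact if_pos (Finset.mem_range.mpr (by omega))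
    -- Part 3
    refine ⟨part1, part2, ?_⟩
    intro hg' i
    have hχX : chiLin g = fun j => (MvPolynomial.X j : MvPolynomial (Fin (n-1)) A) := by
      funext j
      show homogeneousComponent 1 (g j) = _
      have hgX : g j = MvPolynomial.X j + piTop k g j := sub_eq_iff_eq_add.mp (hg'.2 j)
      rw [hgX, map_add]
      rw [homogComponent_of_homog (MvPolynomial.isHomogeneous_X A j), if_pos rfl]
      rw [homogComponent_of_homog (hπg j), if_neg (by omega), add_zero]
    rw [part1 i, hχX]
    have : MvPolynomial.bind₁ (fun j => (MvPolynomial.X j : MvPolynomial (Fin (n-1)) A))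
        (piTop k f i) = piTop k f i := by
      rw [show (fun j => (MvPolynomial.X j : MvPolynomial (Fin (n-1)) A)) = MvPolynomial.X
        from rfl, bind₁_X_left]
      rfl
    rw [this, add_comm]
end
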